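/- arXiv:1003.6119 — 3 statements merged into one kernel-verified Lean document; each statement's English description precedes it below -/
import Mathlib

section
/- Let d ≥ 2 and let p_1, p_2, … be i.i.d. random vectors uniformly distributed on the d-dimensional simplex S_d, and let M_n denote the number of maxima of {p_1,…,p_n}. Then E[M_n] = Σ_{j=0}^{d−1} C(d−1,j) (−1)^j Γ((j+1)/d) n^{(d−1−j)/d} + O(n^{−1/d}) as n → ∞. -/
open MeasureTheory ProbabilityTheory Filter Asymptotics Real Set

noncomputable section

attribute [local instance] Classical.propDecidable

/-- `prec q p` means `q ≺ p`, i.e. `p` strictly dominates `q` in every coordinate. -/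
def prec {d : ℕ} (q p : Fin d → ℝ) : Prop := ∀ i, q i < p i

/-- The `d`-dimensional simplex. -/
def simplex (d : ℕ) : Set (Fin d → ℝ) := {x | (∀ i, 0 ≤ x i) ∧ (∑ i, x i) ≤ 1}

/-- The hypercube `[0,1]^d`. -/
def cube (d : ℕ) : Set (Fin d → ℝ) := Set.univ.pi fun _ => Set.Icc 0 1

/-- The uniform probability measure on a set `S ⊆ ℝ^d`. -/
def unif {d : ℕ} (S : Set (Fin d → ℝ)) : Measure (Fin d → ℝ) :=
  (volume S)⁻¹ • volume.restrict S

/-- The number of Pareto records among `q 0, …, q (n-1)`. -/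
def paretoCount {d : ℕ} (q : ℕ → Fin d → ℝ) (n : ℕ) : ℕ :=
  ((Finset.range n).filter fun k => ∀ i < k, ¬ prec (q k) (q i)).card

/-- The number of maxima among `q 0, …, q (n-1)`. -/
def maxCount {d : ℕ} (q : ℕ → Fin d → ℝ) (n : ℕ) : ℕ :=
  ((Finset.range n).filter fun k => ∀ i < n, i ≠ k → ¬ prec (q k) (q i)).card

/-- The index of the most recent chain record among `q 0, …, q k`. -/
def chainLead {d : ℕ} (q : ℕ → Fin d → ℝ) : ℕ → ℕ
  | 0 => 0
  | k + 1 => if prec (q (chainLead q k)) (q (k + 1)) then k + 1 else chainLead q k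

/-- The number of chain records among `q 0, …, q (n-1)`:
`q 0` is a chain record, and `q k` is a chain record iff it dominates the most recent
chain record among `q 0, …, q (k-1)`. -/
def chainCount {d : ℕ} (q : ℕ → Fin d → ℝ) (n : ℕ) : ℕ :=
  ((Finset.range n).filter fun k => chainLead q k = k).card

/-- The number of dominating records among `q 0, …, q (n-1)`. -/
def domCount {d : ℕ} (q : ℕ → Fin d → ℝ) (n : ℕ) : ℕ :=
  ((Finset.range n).filter fun k => ∀ i < k, prec (q i) (q k)).card

/-- The harmonic-type sum `H_n^{(a)} = ∑_{j=1}^n j^{-a}`. -/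
def genH (a n : ℕ) : ℝ := ∑ j ∈ Finset.range n, (1 : ℝ) / (j + 1 : ℝ) ^ a

/-- The standard normal distribution function `Φ`. -/
def stdNormalCDF (x : ℝ) : ℝ := (gaussianReal 0 1 (Set.Iio x)).toReal


namespace MaximaAux

open Pointwise



variable {d : ℕ}

lemma measurableSet_precSet (x : Fin d → ℝ) : MeasurableSet {y : Fin d → ℝ | prec x y} := by
  have : {y : Fin d → ℝ | prec x y} = ⋂ i, (fun y : Fin d → ℝ => y i) ⁻¹' Ioi (x i) := by
    ext y; simp [prec]
  rw [this]
  exact MeasurableSet.iInter fun i => (measurable_pi_apply i) measurableSet_Ioi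

lemma measurable_sum_coords : Measurable (fun x : Fin d → ℝ => ∑ i, x i) := by
  exact Finset.measurable_sum _ fun i _ => measurable_pi_apply i

lemma measurableSet_simplex : MeasurableSet (simplex d) := by
  have : simplex d = (⋂ i, (fun x : Fin d → ℝ => x i) ⁻¹' Ici 0)
      ∩ ((fun x : Fin d → ℝ => ∑ i, x i) ⁻¹' Iic 1) := by
    ext x; simp [simplex]
  rw [this]
  exact (MeasurableSet.iInter fun i => (measurable_pi_apply i) measurableSet_Ici).inter
    (measurable_sum_coords measurableSet_Iic)

lemma measurableSet_le_sum (s : ℝ) :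
    MeasurableSet {x : Fin d → ℝ | (∀ i, 0 ≤ x i) ∧ (∑ i, x i) ≤ s} := by
  have : {x : Fin d → ℝ | (∀ i, 0 ≤ x i) ∧ (∑ i, x i) ≤ s}
      = (⋂ i, (fun x : Fin d → ℝ => x i) ⁻¹' Ici 0)
      ∩ ((fun x : Fin d → ℝ => ∑ i, x i) ⁻¹' Iic s) := by
    ext x; simp
  rw [this]
  exact (MeasurableSet.iInter fun i => (measurable_pi_apply i) measurableSet_Ici).inter
    (measurable_sum_coords measurableSet_Iic)

lemma simplex_subset_cube : simplex d ⊆ Set.univ.pi fun _ => Icc (0:ℝ) 1 := by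
  intro x hx
  intro i _
  refine ⟨hx.1 i, ?_⟩
  calc x i ≤ ∑ j, x j := Finset.single_le_sum (fun j _ => hx.1 j) (Finset.mem_univ i)
    _ ≤ 1 := hx.2

lemma volume_simplex_lt_top : volume (simplex d) < ⊤ := by
  refine lt_of_le_of_lt (measure_mono simplex_subset_cube) ?_
  rw [volume_pi_pi]
  simp [Real.volume_Icc]

lemma volume_simplex_pos (hd : 0 < d) : 0 < volume (simplex d) := by
  have hsub : (Set.univ.pi fun _ : Fin d => Ioo (0:ℝ) (1/d)) ⊆ simplex d := by
    intro x hx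
    constructor
    · exact fun i => (hx i (Set.mem_univ i)).1.le
    · calc ∑ i, x i ≤ ∑ _i : Fin d, (1/d : ℝ) :=
            Finset.sum_le_sum fun i _ => (hx i (Set.mem_univ i)).2.le
        _ = 1 := by
            rw [Finset.sum_const, Finset.card_univ, Fintype.card_fin, nsmul_eq_mul]
            field_simp
  refine lt_of_lt_of_le ?_ (measure_mono hsub)
  rw [volume_pi_pi]
  simp only [Real.volume_Ioo]
  rw [Finset.prod_const, Finset.card_univ, Fintype.card_fin]
  have : (0:ℝ) < 1/d - 0 := by
    simp only [sub_zero]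
    positivity
  positivity

lemma volume_simplex_ne_zero (hd : 0 < d) : volume (simplex d) ≠ 0 :=
  (volume_simplex_pos hd).ne'

lemma volume_simplex_ne_top : volume (simplex d) ≠ ⊤ := volume_simplex_lt_top.ne

lemma isProb (hd : 0 < d) : IsProbabilityMeasure (unif (simplex d)) := by
  constructor
  rw [unif, Measure.smul_apply, Measure.restrict_apply_univ, smul_eq_mul]
  exact ENNReal.inv_mul_cancel (volume_simplex_ne_zero hd) volume_simplex_ne_top

lemma unif_apply (S A : Set (Fin d → ℝ)) (hA : MeasurableSet A) :
    unif S A = (volume S)⁻¹ * volume (A ∩ S) := by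
  rw [unif, Measure.smul_apply, Measure.restrict_apply hA, smul_eq_mul]

lemma volume_scaled (hd : 0 < d) {s : ℝ} (hs : 0 ≤ s) :
    volume {y : Fin d → ℝ | (∀ i, 0 ≤ y i) ∧ (∑ i, y i) ≤ s}
      = ENNReal.ofReal (s ^ d) * volume (simplex d) := by
  rcases eq_or_lt_of_le hs with h | h
  · have h0 : {y : Fin d → ℝ | (∀ i, 0 ≤ y i) ∧ (∑ i, y i) ≤ s} = {0} := by
      ext y
      simp only [Set.mem_setOf_eq, Set.mem_singleton_iff]
      constructor
      · rintro ⟨h1, h2⟩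
        funext i
        have hle : y i ≤ ∑ j, y j := Finset.single_le_sum (fun j _ => h1 j) (Finset.mem_univ i)
        have := h1 i
        have : y i = 0 := le_antisymm (by rw [← h] at h2; linarith) this
        simpa using this
      · rintro rfl
        constructor
        · intro i; simp
        · simp [← h]
    rw [h0]
    haveI : Nonempty (Fin d) := ⟨⟨0, hd⟩⟩
    rw [measure_singleton, ← h]
    rw [zero_pow hd.ne']
    simp
  · have hset : {y : Fin d → ℝ | (∀ i, 0 ≤ y i) ∧ (∑ i, y i) ≤ s} = s • simplex d := by
      ext y
      rw [Set.mem_smul_set_iff_inv_smul_mem₀ h.ne']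
      simp only [Set.mem_setOf_eq, simplex, Pi.smul_apply, smul_eq_mul]
      constructor
      · rintro ⟨h1, h2⟩
        constructor
        · intro i
          exact mul_nonneg (inv_nonneg.2 h.le) (h1 i)
        · rw [← Finset.mul_sum]
          rw [inv_mul_le_iff₀ h, mul_one]
          exact h2
      · rintro ⟨h1, h2⟩
        constructor
        · intro i
          have hyi : y i = s * (s⁻¹ * y i) := by field_simp
          rw [hyi]
          exact mul_nonneg h.le (h1 i)
        · rw [← Finset.mul_sum, inv_mul_le_iff₀ h, mul_one] at h2
          exact h2
    rw [hset, Measure.addHaar_smul_of_nonneg volume hs (simplex d), Module.finrank_fin_fun]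

lemma volume_strict_eq (s : ℝ) :
    volume {z : Fin d → ℝ | (∀ i, 0 < z i) ∧ (∑ i, z i) ≤ s}
      = volume {z : Fin d → ℝ | (∀ i, 0 ≤ z i) ∧ (∑ i, z i) ≤ s} := by
  refine le_antisymm (measure_mono fun z hz => ⟨fun i => (hz.1 i).le, hz.2⟩) ?_
  have hsub : {z : Fin d → ℝ | (∀ i, 0 ≤ z i) ∧ (∑ i, z i) ≤ s}
      ⊆ {z : Fin d → ℝ | (∀ i, 0 < z i) ∧ (∑ i, z i) ≤ s} ∪ ⋃ i, {z : Fin d → ℝ | z i = 0} := by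
    intro z hz
    by_cases h : ∀ i, 0 < z i
    · exact Or.inl ⟨h, hz.2⟩
    · push_neg at h
      obtain ⟨i, hi⟩ := h
      exact Or.inr (Set.mem_iUnion.2 ⟨i, le_antisymm hi (hz.1 i)⟩)
  refine (measure_mono hsub).trans ?_
  refine le_trans (measure_union_le _ _) ?_
  have hnull : volume (⋃ i, {z : Fin d → ℝ | z i = 0}) = 0 := by
    refine measure_iUnion_null fun i => ?_
    rw [MeasureTheory.volume_pi]
    exact Measure.pi_hyperplane _ i 0
  rw [hnull, add_zero]

lemma volume_inter_prec (hd : 0 < d) {q : Fin d → ℝ} (hq : q ∈ simplex d) :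
    volume ({y : Fin d → ℝ | prec q y} ∩ simplex d)
      = ENNReal.ofReal ((1 - ∑ i, q i) ^ d) * volume (simplex d) := by
  have hs : (0:ℝ) ≤ 1 - ∑ i, q i := by linarith [hq.2]
  have hset : {y : Fin d → ℝ | prec q y} ∩ simplex d
      = (fun y => -q + y) ⁻¹' {z : Fin d → ℝ | (∀ i, 0 < z i) ∧ (∑ i, z i) ≤ 1 - ∑ i, q i} := by
    ext y
    simp only [Set.mem_inter_iff, Set.mem_setOf_eq, Set.mem_preimage, prec, simplex,
      Pi.add_apply, Pi.neg_apply]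
    constructor
    · rintro ⟨h1, _, h3⟩
      refine ⟨fun i => by linarith [h1 i], ?_⟩
      rw [Finset.sum_add_distrib, Finset.sum_neg_distrib]
      linarith
    · rintro ⟨h1, h2⟩
      rw [Finset.sum_add_distrib, Finset.sum_neg_distrib] at h2
      refine ⟨fun i => by linarith [h1 i, hq.1 i], fun i => ?_, by linarith⟩
      linarith [h1 i, hq.1 i]
  rw [hset, measure_preimage_add, volume_strict_eq, volume_scaled hd hs]

lemma unif_precSet (hd : 0 < d) {q : Fin d → ℝ} (hq : q ∈ simplex d) :
    unif (simplex d) {y | prec q y} = ENNReal.ofReal ((1 - ∑ i, q i) ^ d) := by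
  rw [unif_apply _ _ (measurableSet_precSet q), volume_inter_prec hd hq,
    ← mul_assoc, mul_comm ((volume (simplex d))⁻¹) _, mul_assoc,
    ENNReal.inv_mul_cancel (volume_simplex_ne_zero hd) volume_simplex_ne_top, mul_one]

lemma unif_not_precSet (hd : 0 < d) {q : Fin d → ℝ} (hq : q ∈ simplex d) :
    unif (simplex d) {y | ¬ prec q y} = ENNReal.ofReal (1 - (1 - ∑ i, q i) ^ d) := by
  haveI := isProb (d := d) hd
  have hc : {y : Fin d → ℝ | ¬ prec q y} = {y : Fin d → ℝ | prec q y}ᶜ := rfl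
  rw [hc, measure_compl (measurableSet_precSet q) (measure_ne_top _ _),
    unif_precSet hd hq, measure_univ]
  have hs0 : (0:ℝ) ≤ 1 - ∑ i, q i := by linarith [hq.2]
  have hs1 : (1 - ∑ i, q i) ≤ 1 := by
    have : 0 ≤ ∑ i, q i := Finset.sum_nonneg fun i _ => hq.1 i
    linarith
  have hle : ((1 - ∑ i, q i) ^ d) ≤ 1 := pow_le_one₀ hs0 hs1
  rw [← ENNReal.ofReal_one, ← ENNReal.ofReal_sub _ (pow_nonneg hs0 d)]

lemma map_sum_unif (hd : 0 < d) :
    (unif (simplex d)).map (fun x => ∑ i, x i)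
      = (volume.restrict (Ioc (0:ℝ) 1)).map (fun t => t ^ ((d:ℝ)⁻¹)) := by
  haveI := isProb (d := d) hd
  have hmsum := measurable_sum_coords (d := d)
  have hmr : Measurable fun t : ℝ => t ^ ((d:ℝ)⁻¹) :=
    (Real.continuous_rpow_const (by positivity)).measurable
  haveI : IsProbabilityMeasure ((unif (simplex d)).map (fun x => ∑ i, x i)) :=
    Measure.isProbabilityMeasure_map hmsum.aemeasurable
  refine Measure.ext_of_Iic _ _ fun s => ?_
  rw [Measure.map_apply hmsum measurableSet_Iic, Measure.map_apply hmr measurableSet_Iic,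
    Measure.restrict_apply (hmr measurableSet_Iic),
    unif_apply _ _ (hmsum measurableSet_Iic)]
  have hdR : (0:ℝ) < (d:ℝ) := by exact_mod_cast hd
  rcases lt_or_ge s 0 with hs | hs
  · have hL : (fun x : Fin d → ℝ => ∑ i, x i) ⁻¹' Iic s ∩ simplex d = ∅ := by
      ext x
      simp only [Set.mem_inter_iff, Set.mem_preimage, Set.mem_Iic, Set.mem_empty_iff_false,
        iff_false, not_and]
      intro hx hxs
      have : 0 ≤ ∑ i, x i := Finset.sum_nonneg fun i _ => hxs.1 i
      linarith
    have hR : (fun t : ℝ => t ^ ((d:ℝ)⁻¹)) ⁻¹' Iic s ∩ Ioc (0:ℝ) 1 = ∅ := by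
      ext t
      simp only [Set.mem_inter_iff, Set.mem_preimage, Set.mem_Iic, Set.mem_Ioc,
        Set.mem_empty_iff_false, iff_false, not_and]
      intro ht h0 _
      have : (0:ℝ) < t ^ ((d:ℝ)⁻¹) := Real.rpow_pos_of_pos h0 _
      linarith
    rw [hL, hR]
    simp
  · rcases le_or_gt s 1 with hs1 | hs1
    · have hL : (fun x : Fin d → ℝ => ∑ i, x i) ⁻¹' Iic s ∩ simplex d
          = {x : Fin d → ℝ | (∀ i, 0 ≤ x i) ∧ (∑ i, x i) ≤ s} := by
        ext x
        simp only [Set.mem_inter_iff, Set.mem_preimage, Set.mem_Iic, Set.mem_setOf_eq, simplex]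
        constructor
        · rintro ⟨h1, h2⟩; exact ⟨h2.1, h1⟩
        · rintro ⟨h1, h2⟩; exact ⟨h2, h1, le_trans h2 hs1⟩
      have hR : (fun t : ℝ => t ^ ((d:ℝ)⁻¹)) ⁻¹' Iic s ∩ Ioc (0:ℝ) 1 = Ioc 0 (s ^ d) := by
        ext t
        simp only [Set.mem_inter_iff, Set.mem_preimage, Set.mem_Iic, Set.mem_Ioc]
        constructor
        · rintro ⟨h1, h2, h3⟩
          refine ⟨h2, ?_⟩
          have := (Real.rpow_inv_le_iff_of_pos h2.le hs hdR).1 h1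
          rwa [Real.rpow_natCast] at this
        · rintro ⟨h1, h2⟩
          have hsd1 : s ^ d ≤ 1 := pow_le_one₀ hs hs1
          refine ⟨?_, h1, le_trans h2 hsd1⟩
          exact (Real.rpow_inv_le_iff_of_pos h1.le hs hdR).2
            (by rwa [Real.rpow_natCast])
      rw [hL, hR, volume_scaled hd hs, Real.volume_Ioc, ← mul_assoc,
        mul_comm ((volume (simplex d))⁻¹) _, mul_assoc,
        ENNReal.inv_mul_cancel (volume_simplex_ne_zero hd) volume_simplex_ne_top, mul_one,
        sub_zero]
    · have hL : (fun x : Fin d → ℝ => ∑ i, x i) ⁻¹' Iic s ∩ simplex d = simplex d := by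
        ext x
        simp only [Set.mem_inter_iff, Set.mem_preimage, Set.mem_Iic]
        exact ⟨fun h => h.2, fun h => ⟨le_trans h.2 hs1.le, h⟩⟩
      have hR : (fun t : ℝ => t ^ ((d:ℝ)⁻¹)) ⁻¹' Iic s ∩ Ioc (0:ℝ) 1 = Ioc 0 1 := by
        ext t
        simp only [Set.mem_inter_iff, Set.mem_preimage, Set.mem_Iic, Set.mem_Ioc]
        refine ⟨fun h => h.2, fun h => ⟨?_, h⟩⟩
        have : t ^ ((d:ℝ)⁻¹) ≤ 1 := Real.rpow_le_one h.1.le h.2 (by positivity)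
        linarith
      rw [hL, hR, Real.volume_Ioc,
        ENNReal.inv_mul_cancel (volume_simplex_ne_zero hd) volume_simplex_ne_top]
      norm_num


lemma measurableSet_precPairs :
    MeasurableSet {q : (Fin d → ℝ) × (Fin d → ℝ) | prec q.1 q.2} := by
  have : {q : (Fin d → ℝ) × (Fin d → ℝ) | prec q.1 q.2}
      = ⋂ i, {q : (Fin d → ℝ) × (Fin d → ℝ) | q.1 i < q.2 i} := by
    ext q; simp [prec]
  rw [this]
  exact MeasurableSet.iInter fun i => measurableSet_lt
    (measurable_fst.eval) (measurable_snd.eval)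

lemma joint_law {Ω : Type*} [MeasurableSpace Ω] (P : Measure Ω) [IsProbabilityMeasure P]
    (hd : 0 < d) (p : ℕ → Ω → (Fin d → ℝ))
    (hmeas : ∀ n, Measurable (p n))
    (hdist : ∀ n, P.map (p n) = unif (simplex d))
    (hindep : iIndepFun p P) (n : ℕ) :
    P.map (fun ω (i : Fin n) => p i ω) = Measure.pi (fun _ : Fin n => unif (simplex d)) := by
  haveI := isProb (d := d) hd
  have hV : Measurable (fun ω (i : Fin n) => p (i : ℕ) ω) :=
    measurable_pi_lambda _ fun i => hmeas i
  refine (Measure.pi_eq fun s hs => ?_).symm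
  classical
  set sets : ℕ → Set (Fin d → ℝ) := fun k => if h : k < n then s ⟨k, h⟩ else Set.univ with hsets
  have hsetsmeas : ∀ k, k ∈ Finset.range n → MeasurableSet (sets k) := by
    intro k hk
    rw [Finset.mem_range] at hk
    simp only [hsets, dif_pos hk]
    exact hs _
  have hpre : (fun ω (i : Fin n) => p (i : ℕ) ω) ⁻¹' (Set.univ.pi s)
      = ⋂ k ∈ Finset.range n, p k ⁻¹' (sets k) := by
    ext ω
    simp only [Set.mem_preimage, Set.mem_univ_pi, Set.mem_iInter, Finset.mem_range]
    constructor
    · intro h k hk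
      simp only [hsets, dif_pos hk]
      exact h ⟨k, hk⟩
    · intro h i
      have := h i i.isLt
      simpa only [hsets, dif_pos i.isLt] using this
  rw [Measure.map_apply hV (MeasurableSet.univ_pi hs), hpre,
    hindep.measure_inter_preimage_eq_mul (Finset.range n) hsetsmeas]
  have hterm : ∀ k, k ∈ Finset.range n → P (p k ⁻¹' sets k) = unif (simplex d) (sets k) := by
    intro k hk
    rw [← hdist k, Measure.map_apply (hmeas k) ?_]
    · rw [Finset.mem_range] at hk
      simp only [hsets, dif_pos hk]
      exact hs _
  rw [Finset.prod_congr rfl hterm]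
  rw [← Fin.prod_univ_eq_prod_range (fun k => unif (simplex d) (sets k)) n]
  refine Finset.prod_congr rfl fun i _ => ?_
  simp only [hsets, dif_pos i.isLt]

lemma prob_one_max (hd : 0 < d) (m : ℕ) (k : Fin (m+1)) :
    Measure.pi (fun _ : Fin (m+1) => unif (simplex d))
        {x | ∀ j, j ≠ k → ¬ prec (x k) (x j)}
      = ENNReal.ofReal (∫ t in (0:ℝ)..1, (1 - (1 - t ^ ((d:ℝ)⁻¹)) ^ d) ^ m) := by
  haveI := isProb (d := d) hd
  set ν := unif (simplex d) with hν
  set e := MeasurableEquiv.piFinSuccAbove (fun _ : Fin (m+1) => Fin d → ℝ) k with he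
  set C : Set ((Fin d → ℝ) × (Fin m → Fin d → ℝ)) :=
    {y | ∀ j, ¬ prec y.1 (y.2 j)} with hC
  have hCmeas : MeasurableSet C := by
    have : C = ⋂ j, ((fun y : (Fin d → ℝ) × (Fin m → Fin d → ℝ) => (y.1, y.2 j)) ⁻¹'
        {q : (Fin d → ℝ) × (Fin d → ℝ) | prec q.1 q.2})ᶜ := by
      ext y; simp [hC]
    rw [this]
    exact MeasurableSet.iInter fun j => (MeasurableSet.preimage measurableSet_precPairs
      (measurable_fst.prodMk ((measurable_pi_apply j).comp measurable_snd))).compl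
  have hBeq : {x : Fin (m+1) → (Fin d → ℝ) | ∀ j, j ≠ k → ¬ prec (x k) (x j)} = e ⁻¹' C := by
    ext x
    simp only [Set.mem_setOf_eq, Set.mem_preimage]
    have hex : e x = (x k, fun j => x (k.succAbove j)) := rfl
    rw [hex]
    constructor
    · intro h j
      exact h (k.succAbove j) (Fin.succAbove_ne k j)
    · intro h j hj
      obtain ⟨i, rfl⟩ := Fin.exists_succAbove_eq hj
      exact h i
  have hmp := measurePreserving_piFinSuccAbove (fun _ : Fin (m+1) => ν) k
  rw [hBeq, hmp.measure_preimage hCmeas.nullMeasurableSet]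
  rw [Measure.prod_apply hCmeas]
  have hslice : ∀ a : Fin d → ℝ,
      Measure.pi (fun _ : Fin m => ν) (Prod.mk a ⁻¹' C) = (ν {b | ¬ prec a b}) ^ m := by
    intro a
    have h1 : Prod.mk a ⁻¹' C = Set.univ.pi fun _ : Fin m => {b | ¬ prec a b} := by
      ext y; simp [hC]
    rw [h1, Measure.pi_pi]
    simp
  simp only [hslice]
  have hcompl0 : ν (simplex d)ᶜ = 0 := by
    rw [hν, unif_apply _ _ measurableSet_simplex.compl, Set.compl_inter_self]
    simp
  have hae : ∀ᵐ a ∂ν, (ν {b | ¬ prec a b}) ^ m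
      = ENNReal.ofReal ((1 - (1 - ∑ i, a i) ^ d) ^ m) := by
    rw [ae_iff]
    refine measure_mono_null ?_ hcompl0
    intro a ha
    simp only [Set.mem_setOf_eq] at ha
    by_contra hc
    rw [Set.notMem_compl_iff] at hc
    apply ha
    rw [unif_not_precSet hd hc, ← ENNReal.ofReal_pow]
    have h1 : (0:ℝ) ≤ 1 - ∑ i, a i := by linarith [hc.2]
    have h2 : (1 - ∑ i, a i) ≤ 1 := by
      have : 0 ≤ ∑ i, a i := Finset.sum_nonneg fun i _ => hc.1 i
      linarith
    have := pow_le_one₀ (n := d) h1 h2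
    linarith
  rw [lintegral_congr_ae hae]
  have hgR : Continuous fun s : ℝ => (1 - (1 - s) ^ d) ^ m := by continuity
  have hg : Measurable fun s : ℝ => ENNReal.ofReal ((1 - (1 - s) ^ d) ^ m) :=
    ENNReal.measurable_ofReal.comp hgR.measurable
  have hstep1 : ∫⁻ a, ENNReal.ofReal ((1 - (1 - ∑ i, a i) ^ d) ^ m) ∂ν
      = ∫⁻ s, ENNReal.ofReal ((1 - (1 - s) ^ d) ^ m) ∂(ν.map (fun x => ∑ i, x i)) :=
    (lintegral_map hg (measurable_sum_coords)).symm
  rw [hstep1, hν, map_sum_unif hd]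
  have hmr : Measurable fun t : ℝ => t ^ ((d:ℝ)⁻¹) :=
    (Real.continuous_rpow_const (by positivity)).measurable
  rw [lintegral_map hg hmr]
  have hfc : Continuous fun t : ℝ => (1 - (1 - t ^ ((d:ℝ)⁻¹)) ^ d) ^ m :=
    ((continuous_const.sub ((continuous_const.sub
      (Real.continuous_rpow_const (by positivity))).pow d)).pow m)
  have hint : IntegrableOn (fun t : ℝ => (1 - (1 - t ^ ((d:ℝ)⁻¹)) ^ d) ^ m) (Ioc (0:ℝ) 1) :=
    hfc.integrableOn_Ioc
  have hnn : 0 ≤ᵐ[volume.restrict (Ioc (0:ℝ) 1)]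
      fun t : ℝ => (1 - (1 - t ^ ((d:ℝ)⁻¹)) ^ d) ^ m := by
    rw [EventuallyLE, ae_restrict_iff' measurableSet_Ioc]
    refine Eventually.of_forall fun t ht => ?_
    have h0 : (0:ℝ) ≤ t ^ ((d:ℝ)⁻¹) := Real.rpow_nonneg ht.1.le _
    have h1 : t ^ ((d:ℝ)⁻¹) ≤ 1 := Real.rpow_le_one ht.1.le ht.2 (by positivity)
    have h2 : (1 - t ^ ((d:ℝ)⁻¹)) ^ d ≤ 1 := pow_le_one₀ (by linarith) (by linarith)
    have h3 : (0:ℝ) ≤ 1 - (1 - t ^ ((d:ℝ)⁻¹)) ^ d := by linarith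
    exact pow_nonneg h3 m
  rw [← ofReal_integral_eq_lintegral_ofReal hint hnn,
    intervalIntegral.integral_of_le (zero_le_one' ℝ)]

lemma integrand_nonneg {d : ℕ} {t : ℝ} (ht : t ∈ Set.Icc (0:ℝ) 1) (m : ℕ) :
    0 ≤ (1 - (1 - t ^ ((d:ℝ)⁻¹)) ^ d) ^ m := by
  have h0 : (0:ℝ) ≤ t ^ ((d:ℝ)⁻¹) := Real.rpow_nonneg ht.1 _
  have h1 : t ^ ((d:ℝ)⁻¹) ≤ 1 := Real.rpow_le_one ht.1 ht.2 (by positivity)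
  have h2 : (1 - t ^ ((d:ℝ)⁻¹)) ^ d ≤ 1 := pow_le_one₀ (by linarith) (by linarith)
  have h3 : (0:ℝ) ≤ 1 - (1 - t ^ ((d:ℝ)⁻¹)) ^ d := by linarith
  exact pow_nonneg h3 m

lemma expectation_maxCount {Ω : Type*} [MeasurableSpace Ω] (P : Measure Ω)
    [IsProbabilityMeasure P]
    (hd : 0 < d) (p : ℕ → Ω → (Fin d → ℝ))
    (hmeas : ∀ n, Measurable (p n))
    (hdist : ∀ n, P.map (p n) = unif (simplex d))
    (hindep : iIndepFun p P) (m : ℕ) :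
    (∫ ω, (maxCount (fun i => p i ω) (m+1) : ℝ) ∂P)
      = (m+1) * ∫ t in (0:ℝ)..1, (1 - (1 - t ^ ((d:ℝ)⁻¹)) ^ d) ^ m := by
  set E : ℕ → Set Ω := fun k => {ω | ∀ i < m+1, i ≠ k → ¬ prec (p k ω) (p i ω)} with hEdef
  have hEmeas : ∀ k, MeasurableSet (E k) := by
    intro k
    have : E k = ⋂ i, ⋂ (_ : i < m+1), ⋂ (_ : i ≠ k),
        ((fun ω => (p k ω, p i ω)) ⁻¹' {q : (Fin d → ℝ) × (Fin d → ℝ) | prec q.1 q.2})ᶜ := by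
      ext ω; simp [hEdef]
    rw [this]
    exact MeasurableSet.iInter fun i => MeasurableSet.iInter fun _ =>
      MeasurableSet.iInter fun _ =>
      (MeasurableSet.preimage measurableSet_precPairs ((hmeas k).prodMk (hmeas i))).compl
  have hfun : ∀ ω, (maxCount (fun i => p i ω) (m+1) : ℝ)
      = ∑ k ∈ Finset.range (m+1), (E k).indicator (fun _ => (1:ℝ)) ω := by
    intro ω
    rw [maxCount, Finset.card_filter, Nat.cast_sum]
    refine Finset.sum_congr rfl fun k _ => ?_
    rw [apply_ite (Nat.cast : ℕ → ℝ), Nat.cast_one, Nat.cast_zero, Set.indicator_apply]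
    have hiff : (ω ∈ E k) ↔ (∀ i < m+1, i ≠ k → ¬ prec (p k ω) (p i ω)) := Iff.rfl
    by_cases h : ∀ i < m+1, i ≠ k → ¬ prec (p k ω) (p i ω)
    · rw [if_pos h, if_pos (hiff.2 h)]
    · rw [if_neg h, if_neg (fun hc => h (hiff.1 hc))]
  have hint : ∀ k, Integrable ((E k).indicator (fun _ => (1:ℝ))) P :=
    fun k => (integrable_const (1:ℝ)).indicator (hEmeas k)
  calc (∫ ω, (maxCount (fun i => p i ω) (m+1) : ℝ) ∂P)
      = ∫ ω, ∑ k ∈ Finset.range (m+1), (E k).indicator (fun _ => (1:ℝ)) ω ∂P := by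
        simp_rw [hfun]
    _ = ∑ k ∈ Finset.range (m+1), ∫ ω, (E k).indicator (fun _ => (1:ℝ)) ω ∂P :=
        integral_finset_sum _ fun k _ => hint k
    _ = ∑ k ∈ Finset.range (m+1), (P (E k)).toReal := by
        refine Finset.sum_congr rfl fun k _ => ?_
        rw [integral_indicator_const (1:ℝ) (hEmeas k), smul_eq_mul, mul_one]
        rfl
    _ = (m+1) * ∫ t in (0:ℝ)..1, (1 - (1 - t ^ ((d:ℝ)⁻¹)) ^ d) ^ m := by
        have hPk : ∀ k, k ∈ Finset.range (m+1) → (P (E k)).toReal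
            = ∫ t in (0:ℝ)..1, (1 - (1 - t ^ ((d:ℝ)⁻¹)) ^ d) ^ m := by
          intro k hk
          rw [Finset.mem_range] at hk
          set kk : Fin (m+1) := ⟨k, hk⟩ with hkk
          set B : Set (Fin (m+1) → Fin d → ℝ) :=
            {x | ∀ j, j ≠ kk → ¬ prec (x kk) (x j)} with hB
          have hBmeas : MeasurableSet B := by
            have : B = ⋂ j, ⋂ (_ : j ≠ kk),
                ((fun x : Fin (m+1) → Fin d → ℝ => (x kk, x j)) ⁻¹'
                  {q : (Fin d → ℝ) × (Fin d → ℝ) | prec q.1 q.2})ᶜ := by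
              ext x; simp [hB]
            rw [this]
            exact MeasurableSet.iInter fun j => MeasurableSet.iInter fun _ =>
              (MeasurableSet.preimage measurableSet_precPairs
                ((measurable_pi_apply kk).prodMk (measurable_pi_apply j))).compl
          have hpre : E k = (fun ω (i : Fin (m+1)) => p (i : ℕ) ω) ⁻¹' B := by
            ext ω
            simp only [hEdef, hB, Set.mem_setOf_eq, Set.mem_preimage]
            constructor
            · intro h j hj
              refine h j j.isLt fun hc => hj ?_
              exact Fin.ext hc
            · intro h i hi hik
              exact h ⟨i, hi⟩ (fun hc => hik (congrArg Fin.val hc))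
          have hV : Measurable (fun ω (i : Fin (m+1)) => p (i : ℕ) ω) :=
            measurable_pi_lambda _ fun i => hmeas i
          rw [hpre, ← Measure.map_apply hV hBmeas,
            joint_law P hd p hmeas hdist hindep (m+1), hB, prob_one_max hd m kk,
            ENNReal.toReal_ofReal]
          exact intervalIntegral.integral_nonneg zero_le_one fun t ht => integrand_nonneg ht m
        rw [Finset.sum_congr rfl hPk, Finset.sum_const, Finset.card_range, nsmul_eq_mul]
        push_cast
        ring



lemma partial_fraction : ∀ (m : ℕ) {a : ℝ}, 0 < a →
    ∑ i ∈ Finset.range (m+1), ((m.choose i : ℝ) * (-1:ℝ)^i / (a + i))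
      = (m.factorial : ℝ) / ∏ i ∈ Finset.range (m+1), (a + i) := by
  intro m
  induction m with
  | zero => intro a ha; simp
  | succ m ih =>
    intro a ha
    have ha1 : (0:ℝ) < a + 1 := by linarith
    have step : ∑ i ∈ Finset.range (m+1+1), (((m+1).choose i : ℝ) * (-1:ℝ)^i / (a + i))
        = (∑ i ∈ Finset.range (m+1), ((m.choose i : ℝ) * (-1:ℝ)^i / (a + i)))
          - ∑ i ∈ Finset.range (m+1), ((m.choose i : ℝ) * (-1:ℝ)^i / ((a+1) + i)) := by
      rw [Finset.sum_range_succ' (fun i => ((m+1).choose i : ℝ) * (-1:ℝ)^i / (a + i)) (m+1)]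
      have h1 : ∀ i ∈ Finset.range (m+1),
          (((m+1).choose (i+1) : ℝ) * (-1:ℝ)^(i+1) / (a + ((i:ℕ)+1 : ℕ)))
            = ((m.choose (i+1) : ℝ) * (-1:ℝ)^(i+1) / (a + ((i:ℕ)+1 : ℕ))
              - (m.choose i : ℝ) * (-1:ℝ)^i / ((a+1) + i)) := by
        intro i _
        have hc : ((m+1).choose (i+1) : ℝ) = (m.choose i : ℝ) + (m.choose (i+1) : ℝ) := by
          rw [Nat.choose_succ_succ]; push_cast; ring
        have he : ((a:ℝ)+1) + (i:ℝ) = a + ((i:ℕ)+1 : ℕ) := by push_cast; ring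
        have hne : a + (((i:ℕ)+1 : ℕ) : ℝ) ≠ 0 := by push_cast; positivity
        rw [hc, he]
        field_simp
        ring
      rw [Finset.sum_congr rfl h1, Finset.sum_sub_distrib]
      have h2 : (∑ i ∈ Finset.range (m+1), ((m.choose (i+1) : ℝ) * (-1:ℝ)^(i+1) / (a + ((i:ℕ)+1 : ℕ))))
            + ((m+1).choose 0 : ℝ) * (-1:ℝ)^0 / (a + ((0:ℕ):ℝ))
          = ∑ i ∈ Finset.range (m+1+1), ((m.choose i : ℝ) * (-1:ℝ)^i / (a + i)) := by
        rw [Finset.sum_range_succ' (fun i => ((m.choose i : ℝ) * (-1:ℝ)^i / (a + i))) (m+1)]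
        simp
      have h3 : ∑ i ∈ Finset.range (m+1+1), ((m.choose i : ℝ) * (-1:ℝ)^i / (a + i))
          = ∑ i ∈ Finset.range (m+1), ((m.choose i : ℝ) * (-1:ℝ)^i / (a + i)) := by
        rw [Finset.sum_range_succ]
        simp [Nat.choose_succ_self]
      rw [sub_add_eq_add_sub, h2, h3]
    rw [step, ih ha, ih ha1]
    have hPa : (0:ℝ) < ∏ i ∈ Finset.range (m+1), (a + i) :=
      Finset.prod_pos fun i _ => by positivity
    have hPa1 : (0:ℝ) < ∏ i ∈ Finset.range (m+1), ((a+1) + i) :=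
      Finset.prod_pos fun i _ => by positivity
    have hQ1 : ∏ i ∈ Finset.range (m+1+1), (a + i)
        = (∏ i ∈ Finset.range (m+1), (a + i)) * (a + (m+1)) := by
      rw [Finset.prod_range_succ]; push_cast; ring
    have hQ2 : ∏ i ∈ Finset.range (m+1+1), (a + i)
        = a * ∏ i ∈ Finset.range (m+1), ((a+1) + i) := by
      have hc : ∀ i ∈ Finset.range (m+1), a + (((i+1:ℕ)):ℝ) = (a+1) + (i:ℝ) :=
        fun i _ => by push_cast; ring
      rw [Finset.prod_range_succ' (fun i => (a + (i:ℕ))) (m+1), Finset.prod_congr rfl hc]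
      push_cast
      ring
    have hrel : a * ∏ i ∈ Finset.range (m+1), ((a+1) + i)
        = (∏ i ∈ Finset.range (m+1), (a + i)) * (a + (m+1)) := by rw [← hQ2, hQ1]
    rw [hQ1]
    have hfact : ((m+1).factorial : ℝ) = ((m:ℝ)+1) * m.factorial := by
      rw [Nat.factorial_succ]; push_cast; ring
    rw [hfact]
    have ham : (0:ℝ) < a + (m+1) := by positivity
    rw [div_sub_div _ _ hPa.ne' hPa1.ne', div_eq_div_iff (mul_pos hPa hPa1).ne' (mul_pos hPa ham).ne']
    linear_combination ((m.factorial : ℝ) * ∏ i ∈ Finset.range (m+1), (a + (i:ℝ))) * hrel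

lemma gamma_prod (m : ℕ) {a : ℝ} (ha : 0 < a) :
    Real.Gamma (a + m + 1) = Real.Gamma a * ∏ i ∈ Finset.range (m+1), (a + i) := by
  induction m with
  | zero => simp [Real.Gamma_add_one (ne_of_gt ha), mul_comm]
  | succ m ih =>
    have h1 : a + (m+1 : ℕ) + 1 = (a + m + 1) + 1 := by push_cast; ring
    rw [h1, Real.Gamma_add_one (by positivity), ih,
      Finset.prod_range_succ (fun i : ℕ => a + (i:ℝ)) (m+1)]
    push_cast
    ring

lemma gautschi {s : ℝ} (hs0 : 0 < s) (hs1 : s ≤ 1) {x : ℝ} (hx : 1 ≤ x) :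
    x ^ (1 - s) ≤ Real.Gamma (x + 1) / Real.Gamma (x + s) ∧
      Real.Gamma (x + 1) / Real.Gamma (x + s) ≤ x ^ (1 - s) + x ^ (-s) := by
  have hx0 : (0:ℝ) < x := by linarith
  have hxs : (0:ℝ) < x + s := by linarith
  have hGx : 0 < Real.Gamma x := Real.Gamma_pos_of_pos hx0
  have hGxs : 0 < Real.Gamma (x + s) := Real.Gamma_pos_of_pos hxs
  have hGx1 : 0 < Real.Gamma (x + 1) := Real.Gamma_pos_of_pos (by linarith)
  have hconv := Real.convexOn_log_Gamma
  constructor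
  · -- log Γ(x+s) ≤ (1-s) log Γ x + s log Γ (x+1)
    have hcomb := hconv.2 (Set.mem_Ioi.2 hx0) (Set.mem_Ioi.2 (show (0:ℝ) < x + 1 by linarith))
      (by linarith : (0:ℝ) ≤ 1 - s) (le_of_lt hs0) (by ring)
    have heq : (1-s) • x + s • (x+1) = x + s := by simp [smul_eq_mul]; ring
    rw [heq] at hcomb
    simp only [Function.comp_apply, smul_eq_mul] at hcomb
    -- hcomb : log (Γ (x+s)) ≤ (1-s) * log (Γ x) + s * log (Γ (x+1))
    have hG1 : Real.Gamma (x + 1) = x * Real.Gamma x := Real.Gamma_add_one (ne_of_gt hx0)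
    -- Γ(x+s) ≤ Γ(x) * x ^ s
    have h2 : Real.Gamma (x + s) ≤ Real.Gamma x * x ^ s := by
      have : (1-s) * Real.log (Real.Gamma x) + s * Real.log (Real.Gamma (x+1))
          = Real.log (Real.Gamma x * x ^ s) := by
        rw [hG1, Real.log_mul (ne_of_gt hx0) (ne_of_gt hGx), Real.log_mul (ne_of_gt hGx)
          (by positivity), Real.log_rpow hx0]
        ring
      rw [this] at hcomb
      have := Real.exp_le_exp.2 hcomb
      rwa [Real.exp_log hGxs, Real.exp_log (by positivity)] at this
    rw [le_div_iff₀ hGxs]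
    calc x ^ (1-s) * Real.Gamma (x + s) ≤ x ^ (1-s) * (Real.Gamma x * x ^ s) := by
          exact mul_le_mul_of_nonneg_left h2 (by positivity)
      _ = Real.Gamma (x + 1) := by
          rw [hG1]
          rw [show x ^ (1-s) * (Real.Gamma x * x ^ s) = (x ^ (1-s) * x ^ s) * Real.Gamma x by ring]
          rw [← Real.rpow_add hx0]
          norm_num
  · -- Γ(x+1) ≤ Γ(x+s) (x+s)^{1-s} ≤ Γ(x+s) (x+1)^{1-s}
    have hcomb := hconv.2 (Set.mem_Ioi.2 hxs) (Set.mem_Ioi.2 (show (0:ℝ) < x + s + 1 by linarith))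
      (le_of_lt hs0) (by linarith : (0:ℝ) ≤ 1 - s) (by ring)
    have heq : s • (x+s) + (1-s) • (x+s+1) = x + 1 := by simp [smul_eq_mul]; ring
    rw [heq] at hcomb
    simp only [Function.comp_apply, smul_eq_mul] at hcomb
    have hGs1 : Real.Gamma (x + s + 1) = (x+s) * Real.Gamma (x+s) :=
      Real.Gamma_add_one (ne_of_gt hxs)
    have h2 : Real.Gamma (x + 1) ≤ Real.Gamma (x+s) * (x+s) ^ (1-s) := by
      have : s * Real.log (Real.Gamma (x+s)) + (1-s) * Real.log (Real.Gamma (x+s+1))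
          = Real.log (Real.Gamma (x+s) * (x+s) ^ (1-s)) := by
        rw [hGs1, Real.log_mul (ne_of_gt hxs) (ne_of_gt hGxs), Real.log_mul (ne_of_gt hGxs)
          (by positivity), Real.log_rpow hxs]
        ring
      rw [this] at hcomb
      have := Real.exp_le_exp.2 hcomb
      rwa [Real.exp_log hGx1, Real.exp_log (by positivity)] at this
    have h3 : ((x:ℝ)+s) ^ (1-s) ≤ (x+1) ^ (1-s) :=
      Real.rpow_le_rpow (le_of_lt hxs) (by linarith) (by linarith)
    have h4 : ((x:ℝ)+1) ^ (1-s) ≤ x ^ (1-s) + x ^ (-s) := by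
      have e1 : x ^ (1-s) + x ^ (-s) = (x+1) * x ^ (-s) := by
        rw [show (1:ℝ) - s = 1 + (-s) by ring, Real.rpow_add hx0, Real.rpow_one]
        ring
      have e2 : ((x:ℝ)+1) ^ (1-s) = (x+1) * (x+1) ^ (-s) := by
        rw [show (1:ℝ) - s = 1 + (-s) by ring, Real.rpow_add (by linarith), Real.rpow_one]
      rw [e1, e2]
      have : ((x:ℝ)+1) ^ (-s) ≤ x ^ (-s) :=
        Real.rpow_le_rpow_of_nonpos hx0 (by linarith) (by linarith)
      nlinarith [Real.rpow_nonneg (le_of_lt hx0) (-s)]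
    rw [div_le_iff₀ hGxs]
    calc Real.Gamma (x+1) ≤ Real.Gamma (x+s) * (x+s) ^ (1-s) := h2
      _ ≤ Real.Gamma (x+s) * (x+1) ^ (1-s) := mul_le_mul_of_nonneg_left h3 (le_of_lt hGxs)
      _ ≤ Real.Gamma (x+s) * (x ^ (1-s) + x ^ (-s)) := mul_le_mul_of_nonneg_left h4 (le_of_lt hGxs)
      _ = (x ^ (1-s) + x ^ (-s)) * Real.Gamma (x+s) := by ring


lemma one_sub_pow (u : ℝ) (n : ℕ) :
    (1 - u)^n = ∑ j ∈ Finset.range (n+1), ((n.choose j : ℝ) * (-1:ℝ)^j * u^j) := by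
  rw [show (1:ℝ) - u = -u + 1 by ring, add_pow]
  refine Finset.sum_congr rfl fun j _ => ?_
  rw [neg_pow]
  ring

lemma subst_one {d : ℕ} (hd : 0 < d) (m : ℕ) :
    ∫ t in (0:ℝ)..1, (1 - (1 - t ^ ((d:ℝ)⁻¹)) ^ d) ^ m
      = d * ∫ u in (0:ℝ)..1, (1 - u ^ d) ^ m * (1 - u) ^ (d - 1) := by
  have hdR : ((d:ℝ)) ≠ 0 := Nat.cast_ne_zero.2 hd.ne'
  set g : ℝ → ℝ := fun t => (1 - (1 - t ^ ((d:ℝ)⁻¹)) ^ d) ^ m with hg_def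
  have hg : Continuous g :=
    ((continuous_const.sub ((continuous_const.sub
      (Real.continuous_rpow_const (by positivity))).pow d)).pow m)
  have hderiv : ∀ x ∈ Set.uIcc (0:ℝ) 1,
      HasDerivAt (fun u : ℝ => (1 - u)^d) ((d:ℝ) * (1-x)^(d-1) * (-1)) x := by
    intro x _
    exact ((hasDerivAt_id x).const_sub 1).pow d
  have key := intervalIntegral.integral_comp_smul_deriv hderiv
    (Continuous.continuousOn (by continuity)) hg
  have hf0 : ((1:ℝ) - 0)^d = 1 := by simp
  have hf1 : ((1:ℝ) - 1)^d = 0 := by simp [hd.ne']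
  rw [hf0, hf1] at key
  have heq : Set.EqOn (fun u : ℝ => ((d:ℝ) * (1-u)^(d-1) * (-1)) • g ((1-u)^d))
      (fun u : ℝ => -((d:ℝ) * ((1 - u ^ d) ^ m * (1 - u) ^ (d - 1)))) (Set.uIcc (0:ℝ) 1) := by
    intro u hu
    rw [Set.uIcc_of_le (by norm_num : (0:ℝ) ≤ 1)] at hu
    have hu0 : 0 ≤ 1 - u := by simp at hu; linarith [hu.2]
    have hrw : (((1-u)^d : ℝ)) ^ ((d:ℝ)⁻¹) = 1 - u := by
      rw [← Real.rpow_natCast (1-u) d, ← Real.rpow_mul hu0, mul_inv_cancel₀ hdR, Real.rpow_one]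
    simp only [hg_def, smul_eq_mul, hrw]
    ring_nf
  simp only [Function.comp] at key
  rw [intervalIntegral.integral_congr heq, intervalIntegral.integral_neg,
    intervalIntegral.integral_const_mul, intervalIntegral.integral_symm 0 1] at key
  exact (neg_injective key).symm

lemma expand_integral {d : ℕ} (hd : 0 < d) (m : ℕ) :
    ∫ u in (0:ℝ)..1, (1 - u ^ d) ^ m * (1 - u) ^ (d - 1)
      = ∑ j ∈ Finset.range d, ((d-1).choose j : ℝ) * (-1:ℝ)^j *
          ∑ i ∈ Finset.range (m+1), ((m.choose i : ℝ) * (-1:ℝ)^i / ((d:ℝ) * i + j + 1)) := by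
  have hrange : d - 1 + 1 = d := Nat.succ_pred_eq_of_pos hd
  have hexp : ∀ u : ℝ, (1 - u ^ d) ^ m * (1 - u) ^ (d - 1)
      = ∑ j ∈ Finset.range d, ∑ i ∈ Finset.range (m+1),
          (((d-1).choose j : ℝ) * (-1:ℝ)^j * ((m.choose i : ℝ) * (-1:ℝ)^i)) * u ^ (d*i + j) := by
    intro u
    rw [one_sub_pow (u^d) m, one_sub_pow u (d-1), hrange, mul_comm, Finset.sum_mul_sum]
    refine Finset.sum_congr rfl fun j _ => Finset.sum_congr rfl fun i _ => ?_
    have h1 : u ^ (d*i + j) = (u ^ d) ^ i * u ^ j := by rw [pow_add, pow_mul]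
    rw [h1]
    ring
  have hint : ∀ (c : ℝ) (n : ℕ), ∫ u in (0:ℝ)..1, c * u ^ n = c / (n+1) := by
    intro c n
    rw [intervalIntegral.integral_const_mul, integral_pow]
    have h1 : (1:ℝ)^(n+1) - 0^(n+1) = 1 := by norm_num
    rw [h1]
    push_cast
    ring
  calc ∫ u in (0:ℝ)..1, (1 - u ^ d) ^ m * (1 - u) ^ (d - 1)
      = ∫ u in (0:ℝ)..1, ∑ j ∈ Finset.range d, ∑ i ∈ Finset.range (m+1),
          (((d-1).choose j : ℝ) * (-1:ℝ)^j * ((m.choose i : ℝ) * (-1:ℝ)^i)) * u ^ (d*i + j) := by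
        simp_rw [hexp]
    _ = ∑ j ∈ Finset.range d, ∫ u in (0:ℝ)..1, ∑ i ∈ Finset.range (m+1),
          (((d-1).choose j : ℝ) * (-1:ℝ)^j * ((m.choose i : ℝ) * (-1:ℝ)^i)) * u ^ (d*i + j) := by
        rw [intervalIntegral.integral_finset_sum]
        intro j _
        apply Continuous.intervalIntegrable
        continuity
    _ = ∑ j ∈ Finset.range d, ∑ i ∈ Finset.range (m+1), ∫ u in (0:ℝ)..1,
          (((d-1).choose j : ℝ) * (-1:ℝ)^j * ((m.choose i : ℝ) * (-1:ℝ)^i)) * u ^ (d*i + j) := by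
        refine Finset.sum_congr rfl fun j _ => ?_
        rw [intervalIntegral.integral_finset_sum]
        intro i _
        apply Continuous.intervalIntegrable
        continuity
    _ = ∑ j ∈ Finset.range d, ((d-1).choose j : ℝ) * (-1:ℝ)^j *
          ∑ i ∈ Finset.range (m+1), ((m.choose i : ℝ) * (-1:ℝ)^i / ((d:ℝ) * i + j + 1)) := by
        refine Finset.sum_congr rfl fun j _ => ?_
        rw [Finset.mul_sum]
        refine Finset.sum_congr rfl fun i _ => ?_
        rw [hint]
        have : ((d*i + j : ℕ) : ℝ) + 1 = (d:ℝ) * i + j + 1 := by push_cast; ring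
        rw [this]
        ring


lemma mean_eq {d : ℕ} {Ω : Type*} [MeasurableSpace Ω] (P : Measure Ω)
    [IsProbabilityMeasure P]
    (hd : 0 < d) (p : ℕ → Ω → (Fin d → ℝ))
    (hmeas : ∀ n, Measurable (p n))
    (hdist : ∀ n, P.map (p n) = unif (simplex d))
    (hindep : iIndepFun p P) (m : ℕ) :
    (∫ ω, (maxCount (fun i => p i ω) (m+1) : ℝ) ∂P)
      = ∑ j ∈ Finset.range d, ((d-1).choose j : ℝ) * (-1:ℝ)^j * Real.Gamma (((j:ℝ)+1)/d) *
          (Real.Gamma (((m+1:ℕ):ℝ) + 1) / Real.Gamma (((m+1:ℕ):ℝ) + ((j:ℝ)+1)/d)) := by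
  have hdR : (0:ℝ) < (d:ℝ) := by exact_mod_cast hd
  rw [expectation_maxCount P hd p hmeas hdist hindep m, subst_one hd m, expand_integral hd m,
    Finset.mul_sum, Finset.mul_sum]
  refine Finset.sum_congr rfl fun j _ => ?_
  set a : ℝ := ((j:ℝ)+1)/d with ha_def
  have ha : 0 < a := by positivity
  have hinner : ∑ i ∈ Finset.range (m+1), ((m.choose i : ℝ) * (-1:ℝ)^i / ((d:ℝ) * i + j + 1))
      = (1/(d:ℝ)) * ∑ i ∈ Finset.range (m+1), ((m.choose i : ℝ) * (-1:ℝ)^i / (a + i)) := by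
    rw [Finset.mul_sum]
    refine Finset.sum_congr rfl fun i _ => ?_
    have hda : (d:ℝ) * (a + i) = (d:ℝ)*i + j + 1 := by
      rw [ha_def]
      field_simp
      ring
    rw [div_mul_div_comm, one_mul, hda]
  rw [hinner, partial_fraction m ha]
  have hprodpos : (0:ℝ) < ∏ i ∈ Finset.range (m+1), (a + i) :=
    Finset.prod_pos fun i _ => by positivity
  have hΓ1 : Real.Gamma (((m+1:ℕ):ℝ) + 1) = ((m+1).factorial : ℝ) :=
    Real.Gamma_nat_eq_factorial (m+1)
  have hΓ2 : Real.Gamma (((m+1:ℕ):ℝ) + a)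
      = Real.Gamma a * ∏ i ∈ Finset.range (m+1), (a + i) := by
    have harg : ((m+1:ℕ):ℝ) + a = a + m + 1 := by push_cast; ring
    rw [harg, gamma_prod m ha]
  have hΓpos : 0 < Real.Gamma a := Real.Gamma_pos_of_pos ha
  rw [hΓ1, hΓ2]
  have hfact : ((m+1).factorial : ℝ) = ((m:ℝ)+1) * m.factorial := by
    rw [Nat.factorial_succ]; push_cast; ring
  rw [hfact]
  field_simp

lemma term_bound {d : ℕ} (hd : 0 < d) (m j : ℕ) (hj : j ∈ Finset.range d) :
    |Real.Gamma (((m+1:ℕ):ℝ) + 1) / Real.Gamma (((m+1:ℕ):ℝ) + ((j:ℝ)+1)/d)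
        - ((m+1:ℕ):ℝ) ^ (((d:ℝ)-1-j)/d)|
      ≤ ((m+1:ℕ):ℝ) ^ (-(1/(d:ℝ))) := by
  have hdR : (0:ℝ) < (d:ℝ) := by exact_mod_cast hd
  rw [Finset.mem_range] at hj
  set x : ℝ := ((m+1:ℕ):ℝ) with hx_def
  have hx : (1:ℝ) ≤ x := by rw [hx_def]; exact_mod_cast Nat.one_le_iff_ne_zero.2 (Nat.succ_ne_zero m)
  set s : ℝ := ((j:ℝ)+1)/d with hs_def
  have hs0 : 0 < s := by positivity
  have hs1 : s ≤ 1 := by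
    rw [hs_def, div_le_one hdR]
    have : (j:ℝ) + 1 ≤ (d:ℝ) := by exact_mod_cast Nat.succ_le_of_lt hj
    linarith
  have hexp : ((d:ℝ)-1-j)/d = 1 - s := by
    rw [hs_def]
    field_simp
    ring
  rw [hexp]
  obtain ⟨hlow, hhigh⟩ := gautschi hs0 hs1 hx
  have hnn : (0:ℝ) ≤ x ^ (-s) := Real.rpow_nonneg (by linarith) _
  have habs : |Real.Gamma (x + 1) / Real.Gamma (x + s) - x ^ (1-s)| ≤ x ^ (-s) :=
    abs_le.2 ⟨by linarith, by linarith⟩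
  refine le_trans habs ?_
  refine Real.rpow_le_rpow_of_exponent_le hx ?_
  have h1d : 1/(d:ℝ) ≤ s := by
    rw [hs_def, div_le_div_iff₀ hdR hdR]
    have h0j : (0:ℝ) ≤ (j:ℝ) := Nat.cast_nonneg j
    nlinarith
  linarith

end MaximaAux

/-- Asymptotics of the expected number of maxima for iud samples from the
`d`-dimensional simplex. -/
theorem maxima_mean_simplex
    {Ω : Type*} [MeasurableSpace Ω] (P : Measure Ω) [IsProbabilityMeasure P]
    (d : ℕ) (hd : 2 ≤ d) (p : ℕ → Ω → (Fin d → ℝ))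
    (hmeas : ∀ n, Measurable (p n))
    (hdist : ∀ n, P.map (p n) = unif (simplex d))
    (hindep : iIndepFun p P) :
    (fun n : ℕ =>
        (∫ ω, (maxCount (fun i => p i ω) n : ℝ) ∂P) -
          ∑ j ∈ Finset.range d,
            ((d - 1).choose j : ℝ) * (-1 : ℝ) ^ j * Real.Gamma (((j : ℝ) + 1) / d) *
              (n : ℝ) ^ (((d : ℝ) - 1 - j) / d))
      =O[atTop] fun n : ℕ => (n : ℝ) ^ (-(1 / (d : ℝ))) := by
  have hd0 : 0 < d := lt_of_lt_of_le two_pos hd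
  rw [Asymptotics.isBigO_iff]
  refine ⟨∑ j ∈ Finset.range d, ((d-1).choose j : ℝ) * Real.Gamma (((j:ℝ)+1)/d), ?_⟩
  filter_upwards [Filter.eventually_ge_atTop 1] with n hn
  obtain ⟨m, rfl⟩ : ∃ m, n = m + 1 := ⟨n - 1, (Nat.succ_pred_eq_of_pos hn).symm⟩
  rw [MaximaAux.mean_eq P hd0 p hmeas hdist hindep m, ← Finset.sum_sub_distrib]
  have hnorm : ‖((m+1:ℕ):ℝ) ^ (-(1/(d:ℝ)))‖ = ((m+1:ℕ):ℝ) ^ (-(1/(d:ℝ))) :=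
    Real.norm_of_nonneg (Real.rpow_nonneg (Nat.cast_nonneg _) _)
  rw [hnorm]
  refine le_trans (norm_sum_le _ _) ?_
  rw [Finset.sum_mul]
  refine Finset.sum_le_sum fun j hj => ?_
  have hΓpos : 0 < Real.Gamma (((j:ℝ)+1)/d) := Real.Gamma_pos_of_pos (by positivity)
  have hfact : ((d-1).choose j : ℝ) * (-1:ℝ)^j * Real.Gamma (((j:ℝ)+1)/d) *
        (Real.Gamma (((m+1:ℕ):ℝ) + 1) / Real.Gamma (((m+1:ℕ):ℝ) + ((j:ℝ)+1)/d)) -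
      ((d-1).choose j : ℝ) * (-1:ℝ)^j * Real.Gamma (((j:ℝ)+1)/d) *
        ((m+1:ℕ):ℝ) ^ (((d:ℝ)-1-(j:ℝ))/d)
      = ((d-1).choose j : ℝ) * (-1:ℝ)^j * Real.Gamma (((j:ℝ)+1)/d) *
        (Real.Gamma (((m+1:ℕ):ℝ) + 1) / Real.Gamma (((m+1:ℕ):ℝ) + ((j:ℝ)+1)/d) -
          ((m+1:ℕ):ℝ) ^ (((d:ℝ)-1-(j:ℝ))/d)) := by ring
  rw [hfact, norm_mul]
  have h1 : ‖((d-1).choose j : ℝ) * (-1:ℝ)^j * Real.Gamma (((j:ℝ)+1)/d)‖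
      = ((d-1).choose j : ℝ) * Real.Gamma (((j:ℝ)+1)/d) := by
    rw [Real.norm_eq_abs, abs_mul, abs_mul, abs_pow, abs_neg, abs_one, one_pow, mul_one,
      Nat.abs_cast, abs_of_pos hΓpos]
  rw [h1]
  exact mul_le_mul_of_nonneg_left (MaximaAux.term_bound hd0 m j hj)
    (mul_nonneg (Nat.cast_nonneg _) hΓpos.le)
end
end

section
/- Let d ≥ 2 and let p_1, p_2, … be i.i.d. random vectors uniformly distributed on the d-dimensional simplex S_d, and let Y_n denote the number of chain records of p_1,…,p_n. Then for every n ≥ 1, E[Y_n] = Σ_{k=1}^{n} C(n,k) (−1)^{k−1} ∏_{j=1}^{k−1} ( 1 − d!/((dj+1)(dj+2)⋯(dj+d)) ). -/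
open MeasureTheory ProbabilityTheory Filter Asymptotics Real Set

noncomputable section

attribute [local instance] Classical.propDecidable

namespace ChainAux

lemma measurableSet_simplex (d : ℕ) : MeasurableSet (simplex d) := by
  have h1 : MeasurableSet {x : Fin d → ℝ | ∀ i, 0 ≤ x i} := by
    have : {x : Fin d → ℝ | ∀ i, 0 ≤ x i} = ⋂ i, {x | 0 ≤ x i} := by
      ext x; simp [Set.mem_iInter]
    rw [this]
    exact MeasurableSet.iInter fun i =>
      measurableSet_le measurable_const (measurable_pi_apply i)
  have h2 : MeasurableSet {x : Fin d → ℝ | (∑ i, x i) ≤ 1} :=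
    measurableSet_le (Finset.measurable_sum _ fun i _ => measurable_pi_apply i) measurable_const
  exact h1.inter h2

lemma simplex_subset_cube (d : ℕ) : simplex d ⊆ Set.univ.pi fun _ => Set.Icc (0:ℝ) 1 := by
  rintro x ⟨hx0, hx1⟩ i _
  refine ⟨hx0 i, ?_⟩
  calc x i ≤ ∑ j, x j := Finset.single_le_sum (fun j _ => hx0 j) (Finset.mem_univ i)
  _ ≤ 1 := hx1

lemma volume_cube (d : ℕ) : volume (Set.univ.pi fun _ : Fin d => Set.Icc (0:ℝ) 1) = 1 := by
  rw [volume_pi_pi]; simp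

lemma volume_simplex_lt_top (d : ℕ) : volume (simplex d) < ⊤ := by
  calc volume (simplex d) ≤ volume (Set.univ.pi fun _ : Fin d => Set.Icc (0:ℝ) 1) :=
        measure_mono (simplex_subset_cube d)
  _ = 1 := volume_cube d
  _ < ⊤ := by norm_num

/-- the master integrand -/
def sInt (d m : ℕ) : (Fin d → ℝ) → ℝ :=
  fun x => if x ∈ simplex d then (1 - ∑ i, x i) ^ m else 0

lemma sInt_nonneg (d m : ℕ) (x : Fin d → ℝ) : 0 ≤ sInt d m x := by
  unfold sInt
  split
  · next h => exact pow_nonneg (by linarith [h.2]) m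
  · exact le_refl 0

lemma sum_nonneg_of_simplex {d : ℕ} {x : Fin d → ℝ} (hx : x ∈ simplex d) :
    0 ≤ ∑ i, x i := Finset.sum_nonneg fun i _ => hx.1 i

lemma sInt_le_one (d m : ℕ) (x : Fin d → ℝ) : sInt d m x ≤ 1 := by
  unfold sInt
  split
  · next h =>
      exact pow_le_one₀ (by linarith [h.2]) (by linarith [sum_nonneg_of_simplex h])
  · exact zero_le_one

lemma measurable_sInt (d m : ℕ) : Measurable (sInt d m) := by
  unfold sInt
  exact Measurable.ite (measurableSet_simplex d)
    (((measurable_const.sub (Finset.measurable_sum _ fun i _ => measurable_pi_apply i)).pow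
      measurable_const)) measurable_const

lemma integrable_sInt (d m : ℕ) : Integrable (sInt d m) := by
  refine Integrable.mono' (g := (simplex d).indicator fun _ => (1:ℝ)) ?_ ?_ ?_
  · exact (integrable_indicator_iff (measurableSet_simplex d)).2
      (integrableOn_const (volume_simplex_lt_top d).ne)
  · exact (measurable_sInt d m).aestronglyMeasurable
  · refine Filter.Eventually.of_forall fun x => ?_
    rw [Real.norm_eq_abs, abs_of_nonneg (sInt_nonneg d m x)]
    unfold sInt
    by_cases h : x ∈ simplex d
    · rw [Set.indicator_of_mem h]
      simpa [sInt, h] using sInt_le_one d m x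
    · simp [h]

lemma finrank_pi_fin (d : ℕ) : Module.finrank ℝ (Fin d → ℝ) = d := by
  simp [Module.finrank_fin_fun]

/-- Scaling lemma: integral over the simplex scaled by `c ≥ 0`. -/
lemma integral_scaled (d m : ℕ) (c : ℝ) (hc : 0 ≤ c) :
    ∫ z : Fin d → ℝ,
      (if (∀ i, 0 ≤ z i) ∧ (∑ i, z i) ≤ c then (c - ∑ i, z i) ^ m else 0) =
      c ^ (m + d) * ∫ x, sInt d m x := by
  set F : (Fin d → ℝ) → ℝ :=
    fun z => if (∀ i, 0 ≤ z i) ∧ (∑ i, z i) ≤ c then (c - ∑ i, z i) ^ m else 0 with hF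
  rcases lt_or_eq_of_le hc with hc0 | rfl
  · -- c > 0
    have key : ∀ z : Fin d → ℝ, F (c • z) = c ^ m * sInt d m z := by
      intro z
      have hsum : (∑ i, (c • z) i) = c * ∑ i, z i := by
        simp [Finset.mul_sum]
      simp only [hF, sInt, simplex, Set.mem_setOf_eq, hsum]
      by_cases h1 : (∀ i, 0 ≤ z i) ∧ (∑ i, z i) ≤ 1
      · have h1' : (∀ i, 0 ≤ (c • z) i) ∧ c * ∑ i, z i ≤ c := by
          constructor
          · intro i; exact mul_nonneg hc (h1.1 i)
          · nlinarith [h1.2]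
        rw [if_pos ⟨h1'.1, h1'.2⟩, if_pos h1]
        rw [← mul_pow]
        ring_nf
      · have h1' : ¬ ((∀ i, 0 ≤ (c • z) i) ∧ c * ∑ i, z i ≤ c) := by
          intro hcon
          apply h1
          constructor
          · intro i
            have := hcon.1 i
            simp only [Pi.smul_apply, smul_eq_mul] at this
            nlinarith [this]
          · nlinarith [hcon.2]
        rw [if_neg h1', if_neg h1]
        ring
    have := MeasureTheory.Measure.integral_comp_smul (volume : Measure (Fin d → ℝ)) F c
    rw [finrank_pi_fin] at this
    simp only [key] at this
    rw [integral_const_mul] at this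
    have habs : |(c ^ d)⁻¹| = (c ^ d)⁻¹ := abs_of_nonneg (by positivity)
    rw [habs, smul_eq_mul] at this
    -- this : c ^ m * ∫ sInt = (c^d)⁻¹ * ∫ F
    have hcd : (c : ℝ) ^ d ≠ 0 := by positivity
    field_simp at this
    rw [pow_add]
    nlinarith [this]
  · -- c = 0
    rcases Nat.eq_zero_or_pos d with hd | hd
    · subst hd
      have huniv : (volume : Measure (Fin 0 → ℝ)) Set.univ = 1 := by
        rw [volume_pi, Measure.pi_univ]; simp
      have hFconst : F = fun _ => (0:ℝ) ^ m := by
        funext z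
        have : (∑ i, z i) = 0 := by simp
        simp [hF, this]
      have hsconst : sInt 0 m = fun _ => (1:ℝ) ^ m := by
        funext z
        have h0 : z ∈ simplex 0 := ⟨fun i => i.elim0, by simp⟩
        simp [sInt, h0]
      rw [hFconst, hsconst, integral_const, integral_const, measureReal_def, huniv]
      rcases Nat.eq_zero_or_pos m with hm | hm
      · simp [hm]
      · simp [zero_pow (by omega : m + 0 ≠ 0), zero_pow (by omega : m ≠ 0)]
    · -- d ≥ 1, c = 0 : F is a.e. zero
      have hae : F =ᵐ[volume] (fun _ => (0:ℝ)) := by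
        have hnull : (volume : Measure (Fin d → ℝ)) {z | z ⟨0, hd⟩ = 0} = 0 := by
          rw [volume_pi]
          exact Measure.pi_hyperplane _ _ 0
        refine Filter.eventuallyEq_of_mem (compl_mem_ae_iff.2 hnull) ?_
        intro z hz
        simp only [Set.mem_compl_iff, Set.mem_setOf_eq] at hz
        simp only [hF]
        rw [if_neg]
        rintro ⟨hz0, hzs⟩
        apply hz
        have hle : z ⟨0, hd⟩ ≤ 0 := by
          have := Finset.single_le_sum (fun i (_ : i ∈ Finset.univ) => hz0 i)
            (Finset.mem_univ ⟨0, hd⟩)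
          linarith
        linarith [hz0 ⟨0, hd⟩]
      rw [integral_congr_ae hae, integral_zero, zero_pow (by omega : m + d ≠ 0), zero_mul]

/-- The Dirichlet integral over the simplex. -/
lemma integral_sInt (d m : ℕ) :
    ∫ x, sInt d m x = (m.factorial : ℝ) / (m + d).factorial := by
  induction d with
  | zero =>
      have huniv : (volume : Measure (Fin 0 → ℝ)) Set.univ = 1 := by
        rw [volume_pi, Measure.pi_univ]; simp
      have hsconst : sInt 0 m = fun _ => (1:ℝ) := by
        funext z
        have h0 : z ∈ simplex 0 := ⟨fun i => i.elim0, by simp⟩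
        simp [sInt, h0]
      rw [hsconst, integral_const, measureReal_def, huniv]
      rw [Nat.add_zero, div_self (by exact_mod_cast m.factorial_ne_zero)]
      simp
  | succ d ih =>
      have hMP := (measurePreserving_piFinSuccAbove
        (fun _ : Fin (d + 1) => (volume : Measure ℝ)) 0).symm
      set G : ℝ × (Fin d → ℝ) → ℝ := fun y => sInt (d+1) m (Fin.cons y.1 y.2) with hG
      have hsymm : ∀ y : ℝ × (Fin d → ℝ),
          (MeasurableEquiv.piFinSuccAbove (fun _ : Fin (d+1) => ℝ) 0).symm y
            = Fin.cons y.1 y.2 := by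
        intro y
        ext i
        refine Fin.cases ?_ ?_ i
        · simp [MeasurableEquiv.piFinSuccAbove]
        · intro j
          simp [MeasurableEquiv.piFinSuccAbove, Fin.zero_succAbove]
      have hpi2 : (Measure.pi fun _ : Fin d => (volume : Measure ℝ)) = volume := volume_pi.symm
      have step1 : ∫ x, sInt (d+1) m x =
          ∫ y, G y ∂((volume : Measure ℝ).prod (volume : Measure (Fin d → ℝ))) := by
        rw [show (volume : Measure (Fin (d+1) → ℝ)) = Measure.pi fun _ => volume from volume_pi,
          ← hMP.integral_comp']
        simp_rw [hsymm]
        rw [show (Measure.pi fun _ : Fin d => (volume : Measure ℝ)) = volume from volume_pi.symm]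
      have stepInt : Integrable G ((volume : Measure ℝ).prod (volume : Measure (Fin d → ℝ))) := by
        have h2 := (hMP.integrable_comp_emb
          (MeasurableEquiv.measurableEmbedding _)).2 (integrable_sInt (d+1) m)
        rw [show (Measure.pi fun _ : Fin d => (volume : Measure ℝ)) = volume from volume_pi.symm]
          at h2
        convert h2 using 1
        funext y
        simp only [Function.comp_apply, hsymm, hG]
      have hcons : ∀ (t : ℝ) (z : Fin d → ℝ),
          ((Fin.cons t z : Fin (d+1) → ℝ) ∈ simplex (d+1)) ↔
          (0 ≤ t ∧ ((∀ i, 0 ≤ z i) ∧ t + ∑ i, z i ≤ 1)) := by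
        intro t z
        constructor
        · rintro ⟨h0, h1⟩
          rw [Fin.sum_cons] at h1
          refine ⟨by simpa using h0 0, fun i => by simpa using h0 i.succ, h1⟩
        · rintro ⟨h0, h1, h2⟩
          constructor
          · intro i
            refine Fin.cases ?_ ?_ i
            · simpa using h0
            · intro j; simpa using h1 j
          · rw [Fin.sum_cons]; exact h2
      have inner : ∀ t : ℝ, (∫ z, G (t, z)) =
          Set.indicator (Set.Icc (0:ℝ) 1) (fun t => (1-t)^(m+d)) t *
            ((m.factorial : ℝ) / (m + d).factorial) := by
        intro t
        by_cases ht : t ∈ Set.Icc (0:ℝ) 1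
        · obtain ⟨ht0, ht1⟩ := ht
          have heq : ∀ z : Fin d → ℝ, G (t, z) =
              (if (∀ i, 0 ≤ z i) ∧ (∑ i, z i) ≤ (1 - t) then ((1-t) - ∑ i, z i) ^ m else 0) := by
            intro z
            simp only [hG, sInt, hcons]
            by_cases hz : (∀ i, 0 ≤ z i) ∧ (∑ i, z i) ≤ 1 - t
            · have hcond : 0 ≤ t ∧ (∀ i, 0 ≤ z i) ∧ t + ∑ x, z x ≤ 1 :=
                ⟨ht0, hz.1, by linarith [hz.2]⟩
              rw [if_pos hcond, if_pos hz, Fin.sum_cons]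
              ring_nf
            · have hcond : ¬ (0 ≤ t ∧ (∀ i, 0 ≤ z i) ∧ t + ∑ x, z x ≤ 1) := by
                rintro ⟨-, h1, h2⟩
                exact hz ⟨h1, by linarith⟩
              rw [if_neg hcond, if_neg hz]
          rw [show (fun z => G (t, z)) = _ from funext heq, integral_scaled d m (1-t) (by linarith),
            ih, Set.indicator_of_mem (show t ∈ Set.Icc (0:ℝ) 1 from ⟨ht0, ht1⟩)]
        · have heq : ∀ z : Fin d → ℝ, G (t, z) = 0 := by
            intro z
            simp only [hG, sInt]
            rw [if_neg]
            rw [hcons]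
            rintro ⟨h0, h1, h2⟩
            simp only [Set.mem_Icc, not_and_or, not_le] at ht
            rcases ht with ht | ht
            · linarith
            · have : 0 ≤ ∑ i, z i := Finset.sum_nonneg fun i _ => h1 i
              linarith
          rw [show (fun z => G (t, z)) = _ from funext heq, integral_zero,
            Set.indicator_of_notMem ht, zero_mul]
      rw [step1, MeasureTheory.integral_prod _ stepInt]
      simp_rw [inner]
      rw [integral_mul_const, integral_indicator measurableSet_Icc,
        MeasureTheory.integral_Icc_eq_integral_Ioc,
        ← intervalIntegral.integral_of_le (by norm_num : (0:ℝ) ≤ 1)]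
      have : (∫ x in (0:ℝ)..1, (1 - x)^(m+d)) = 1 / (m + d + 1) := by
        rw [intervalIntegral.integral_comp_sub_left (fun u => u ^ (m+d)) 1]
        simp only [sub_zero, sub_self]
        rw [integral_pow]
        simp
      rw [this]
      have h1 : ((m + (d+1)).factorial : ℝ) = ((m+d+1) : ℝ) * (m+d).factorial := by
        have : m + (d+1) = (m + d) + 1 := by omega
        rw [this, Nat.factorial_succ]
        push_cast
        ring
      rw [h1]
      have h2 : ((m+d).factorial : ℝ) ≠ 0 := by exact_mod_cast (m+d).factorial_ne_zero
      have h3 : ((m:ℝ)+d+1) ≠ 0 := by positivity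
      field_simp
      try ring

lemma toReal_volume_simplex (d : ℕ) :
    (volume (simplex d)).toReal = 1 / d.factorial := by
  have h := integral_sInt d 0
  have hind : sInt d 0 = (simplex d).indicator (fun _ => (1:ℝ)) := by
    funext x
    by_cases hx : x ∈ simplex d <;> simp [sInt, hx]
  rw [hind] at h
  rw [MeasureTheory.integral_indicator (measurableSet_simplex d)] at h
  simp only [MeasureTheory.integral_const, smul_eq_mul, mul_one,
    MeasureTheory.Measure.restrict_apply_univ] at h
  rw [measureReal_def] at h
  simpa using h

lemma volume_simplex_ne_zero (d : ℕ) : volume (simplex d) ≠ 0 := by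
  intro h
  have := toReal_volume_simplex d
  rw [h] at this
  simp only [ENNReal.toReal_zero] at this
  have : (0:ℝ) < 1 / d.factorial := by positivity
  linarith [this, (toReal_volume_simplex d)]

lemma volume_simplex_ne_top (d : ℕ) : volume (simplex d) ≠ ⊤ :=
  (volume_simplex_lt_top d).ne

instance unif_simplex_prob (d : ℕ) : IsProbabilityMeasure (unif (simplex d)) := by
  constructor
  rw [unif, Measure.smul_apply, Measure.restrict_apply MeasurableSet.univ,
    Set.univ_inter, smul_eq_mul]
  exact ENNReal.inv_mul_cancel (volume_simplex_ne_zero d) (volume_simplex_ne_top d)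

lemma unif_null {d : ℕ} {A : Set (Fin d → ℝ)} (hA : volume A = 0) :
    unif (simplex d) A = 0 := by
  rw [unif, Measure.smul_apply]
  have : volume.restrict (simplex d) A = 0 :=
    le_antisymm (le_trans (Measure.restrict_le_self A) hA.le) zero_le
  rw [this, smul_zero]

lemma unif_ae_mem (d : ℕ) : ∀ᵐ y ∂(unif (simplex d)), y ∈ simplex d := by
  rw [MeasureTheory.ae_iff]
  have : {y : Fin d → ℝ | ¬ y ∈ simplex d} = (simplex d)ᶜ := rfl
  rw [this, unif, Measure.smul_apply,
    Measure.restrict_apply (measurableSet_simplex d).compl]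
  simp

lemma integral_unif (d : ℕ) (f : (Fin d → ℝ) → ℝ) :
    ∫ y, f y ∂(unif (simplex d)) =
      (d.factorial : ℝ) * ∫ y, (simplex d).indicator f y := by
  rw [unif, MeasureTheory.integral_smul_measure,
    ← MeasureTheory.integral_indicator (measurableSet_simplex d)]
  congr 1
  rw [ENNReal.toReal_inv, toReal_volume_simplex]
  simp

/-- Key computation: integral of the dominance-region weight under the uniform measure. -/
lemma integral_unif_prec {d : ℕ} (m : ℕ) {x : Fin d → ℝ} (hx : x ∈ simplex d) :
    ∫ y, (if prec x y then (1 - ∑ i, y i) ^ m else 0) ∂(unif (simplex d)) =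
    ((d.factorial : ℝ) * m.factorial / (m + d).factorial) * (1 - ∑ i, x i) ^ (m + d) := by
  rw [integral_unif]
  have hind : (simplex d).indicator (fun y => if prec x y then (1 - ∑ i, y i) ^ m else 0) =
      fun y => if (∀ i, x i < y i) ∧ (∑ i, y i) ≤ 1 then (1 - ∑ i, y i) ^ m else 0 := by
    funext y
    by_cases hy : y ∈ simplex d
    · rw [Set.indicator_of_mem hy]
      by_cases hp : prec x y
      · rw [if_pos hp, if_pos ⟨hp, hy.2⟩]
      · rw [if_neg hp, if_neg (fun h => hp h.1)]
    · rw [Set.indicator_of_notMem hy]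
      rw [if_neg]
      rintro ⟨h1, h2⟩
      exact hy ⟨fun i => le_of_lt (lt_of_le_of_lt (hx.1 i) (h1 i)), h2⟩
  rw [hind]
  set c : ℝ := 1 - ∑ i, x i with hc
  have hc0 : 0 ≤ c := by simp only [hc]; linarith [hx.2]
  have htrans : (∫ y : Fin d → ℝ,
        (if (∀ i, x i < y i) ∧ (∑ i, y i) ≤ 1 then (1 - ∑ i, y i) ^ m else 0)) =
      ∫ z : Fin d → ℝ, (if (∀ i, 0 < z i) ∧ (∑ i, z i) ≤ c then (c - ∑ i, z i) ^ m else 0) := by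
    rw [← MeasureTheory.integral_add_left_eq_self
      (μ := (volume : Measure (Fin d → ℝ)))
      (fun y => if (∀ i, x i < y i) ∧ (∑ i, y i) ≤ 1 then (1 - ∑ i, y i) ^ m else 0) x]
    congr 1
    funext z
    have hsum : (∑ i, (x + z) i) = (∑ i, x i) + ∑ i, z i := by
      simp [Finset.sum_add_distrib]
    have hiff : ((∀ i, x i < (x + z) i) ∧ (∑ i, (x + z) i) ≤ 1) ↔
        ((∀ i, 0 < z i) ∧ (∑ i, z i) ≤ c) := by
      rw [hsum]
      constructor
      · rintro ⟨h1, h2⟩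
        exact ⟨fun i => by have := h1 i; simpa using this, by simp only [hc]; linarith⟩
      · rintro ⟨h1, h2⟩
        exact ⟨fun i => by simpa using h1 i, by simp only [hc] at h2; linarith⟩
    by_cases hcond : (∀ i, 0 < z i) ∧ (∑ i, z i) ≤ c
    · rw [if_pos (hiff.2 hcond), if_pos hcond, hsum]
      simp only [hc]
      ring_nf
    · rw [if_neg (fun h => hcond (hiff.1 h)), if_neg hcond]
  have hae : (fun z : Fin d → ℝ =>
        (if (∀ i, 0 < z i) ∧ (∑ i, z i) ≤ c then (c - ∑ i, z i) ^ m else 0)) =ᵐ[volume]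
      (fun z => (if (∀ i, 0 ≤ z i) ∧ (∑ i, z i) ≤ c then (c - ∑ i, z i) ^ m else 0)) := by
    have hnull : (volume : Measure (Fin d → ℝ)) (⋃ i, {z | z i = 0}) = 0 := by
      rw [measure_iUnion_null_iff]
      intro i
      rw [volume_pi]
      exact Measure.pi_hyperplane _ _ 0
    refine Filter.eventuallyEq_of_mem (compl_mem_ae_iff.2 hnull) ?_
    intro z hz
    simp only [Set.mem_compl_iff, Set.mem_iUnion, Set.mem_setOf_eq, not_exists] at hz
    have : (∀ i, 0 < z i) ↔ (∀ i, 0 ≤ z i) := by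
      constructor
      · exact fun h i => (h i).le
      · exact fun h i => lt_of_le_of_ne (h i) (Ne.symm (hz i))
    simp only [this]
  rw [htrans, integral_congr_ae hae, integral_scaled d m c hc0, integral_sInt d m]
  ring

lemma measurableSet_prec_pair (d : ℕ) :
    MeasurableSet {z : (Fin d → ℝ) × (Fin d → ℝ) | prec z.1 z.2} := by
  have : {z : (Fin d → ℝ) × (Fin d → ℝ) | prec z.1 z.2} =
      ⋂ i, {z : (Fin d → ℝ) × (Fin d → ℝ) | z.1 i < z.2 i} := by
    ext z; simp [prec, Set.mem_iInter]
  rw [this]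
  refine MeasurableSet.iInter fun i => measurableSet_lt ?_ ?_
  · exact (measurable_pi_apply i).comp measurable_fst
  · exact (measurable_pi_apply i).comp measurable_snd

section Comb

variable (u : ℕ → ℝ)

def Pr (i : ℕ) : ℝ := ∏ l ∈ Finset.range i, (1 - u (1 + l))

def Aq (j n : ℕ) : ℝ :=
  ∑ i ∈ Finset.range (n + 1),
    (-1 : ℝ) ^ i * (n.choose i) * (∏ l ∈ Finset.range i, (1 - u (j + l))) * u (j + i)

def Bq (n : ℕ) : ℝ :=
  ∑ i ∈ Finset.range (n + 1), (-1 : ℝ) ^ i * (n.choose i) * Pr u i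

def Tq (n : ℕ) : ℝ :=
  ∑ i ∈ Finset.range n, (n.choose (i + 1) : ℝ) * (-1 : ℝ) ^ i * Pr u i

lemma Aq_zero (j : ℕ) : Aq u j 0 = u j := by
  simp [Aq]

lemma Aq_rec (j n : ℕ) : Aq u j (n + 1) = Aq u j n - (1 - u j) * Aq u (j + 1) n := by
  have hQsucc : ∀ i : ℕ, (∏ l ∈ Finset.range (i+1), (1 - u (j + l))) =
      (1 - u j) * ∏ l ∈ Finset.range i, (1 - u (j + 1 + l)) := by
    intro i
    rw [Finset.prod_range_succ']
    have h : (∏ l ∈ Finset.range i, (1 - u (j + (l + 1)))) =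
        ∏ l ∈ Finset.range i, (1 - u (j + 1 + l)) :=
      Finset.prod_congr rfl fun l _ => by rw [show j + (l+1) = j+1+l from by omega]
    rw [h, add_zero]
    ring
  have claim1 : Aq u j (n+1) = u j + ∑ i ∈ Finset.range (n+1),
      ((-1:ℝ)^(i+1) * ((n.choose (i+1) : ℝ) + (n.choose i : ℝ)) *
        (∏ l ∈ Finset.range (i+1), (1 - u (j + l))) * u (j+1+i)) := by
    rw [Aq, Finset.sum_range_succ']
    have hterm : ∀ i ∈ Finset.range (n+1),
        ((-1:ℝ)^(i+1) * (((n+1).choose (i+1) : ℝ)) *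
          (∏ l ∈ Finset.range (i+1), (1 - u (j + l)))) * u (j+(i+1))
        = ((-1:ℝ)^(i+1) * ((n.choose (i+1) : ℝ) + (n.choose i : ℝ)) *
          (∏ l ∈ Finset.range (i+1), (1 - u (j + l))) * u (j+1+i)) := by
      intro i _
      have h1 : j + (i + 1) = j + 1 + i := by omega
      rw [Nat.choose_succ_succ]
      push_cast
      rw [h1]
      ring
    rw [Finset.sum_congr rfl hterm]
    have h0 : ((-1:ℝ)^0 * (((n+1)).choose 0 : ℝ) *
        (∏ l ∈ Finset.range 0, (1 - u (j + l)))) * u (j+0) = u j := by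
      simp
    rw [h0, add_comm]
  have claim2 : Aq u j n = u j + ∑ i ∈ Finset.range (n+1),
      ((-1:ℝ)^(i+1) * (n.choose (i+1) : ℝ) *
        (∏ l ∈ Finset.range (i+1), (1 - u (j + l))) * u (j+1+i)) := by
    rw [Finset.sum_range_succ]
    simp only [Nat.choose_succ_self, Nat.cast_zero]
    rw [Aq, Finset.sum_range_succ']
    have hterm : ∀ i ∈ Finset.range n,
        ((-1:ℝ)^(i+1) * ((n.choose (i+1) : ℝ)) *
          (∏ l ∈ Finset.range (i+1), (1 - u (j + l)))) * u (j+(i+1))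
        = ((-1:ℝ)^(i+1) * (n.choose (i+1) : ℝ) *
          (∏ l ∈ Finset.range (i+1), (1 - u (j + l))) * u (j+1+i)) := by
      intro i _
      have h1 : j + (i + 1) = j + 1 + i := by omega
      rw [h1]
    rw [Finset.sum_congr rfl hterm]
    have h0 : ((-1:ℝ)^0 * ((n.choose 0 : ℝ)) *
        (∏ l ∈ Finset.range 0, (1 - u (j + l)))) * u (j+0) = u j := by
      simp
    rw [h0, add_comm]
    try ring
  have claim3 : (1 - u j) * Aq u (j+1) n = ∑ i ∈ Finset.range (n+1),
      ((-1:ℝ)^i * (n.choose i : ℝ) *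
        (∏ l ∈ Finset.range (i+1), (1 - u (j + l))) * u (j+1+i)) := by
    rw [Aq, Finset.mul_sum]
    refine Finset.sum_congr rfl fun i _ => ?_
    rw [hQsucc i]
    ring
  have expand : ∀ i : ℕ,
      (-1:ℝ)^(i+1) * ((n.choose (i+1) : ℝ) + (n.choose i : ℝ)) *
        (∏ l ∈ Finset.range (i+1), (1 - u (j + l))) * u (j+1+i)
      = ((-1:ℝ)^(i+1) * (n.choose (i+1) : ℝ) *
          (∏ l ∈ Finset.range (i+1), (1 - u (j + l))) * u (j+1+i))
        - ((-1:ℝ)^i * (n.choose i : ℝ) *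
          (∏ l ∈ Finset.range (i+1), (1 - u (j + l))) * u (j+1+i)) := by
    intro i
    ring
  rw [claim1, claim2, claim3]
  rw [Finset.sum_congr rfl (fun i _ => expand i), Finset.sum_sub_distrib]
  ring

lemma TB (n : ℕ) : Tq u (n + 1) = Tq u n + Bq u n := by
  have claim1 : Tq u (n+1) =
      Bq u n + ∑ i ∈ Finset.range (n+1), (n.choose (i+1) : ℝ) * (-1:ℝ)^i * Pr u i := by
    rw [Tq, Bq, ← Finset.sum_add_distrib]
    refine Finset.sum_congr rfl fun i _ => ?_
    rw [Nat.choose_succ_succ]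
    push_cast
    ring
  have claim2 : (∑ i ∈ Finset.range (n+1), (n.choose (i+1) : ℝ) * (-1:ℝ)^i * Pr u i)
      = Tq u n := by
    rw [Finset.sum_range_succ, Tq]
    simp [Nat.choose_succ_self]
  rw [claim1, claim2]
  ring

lemma A1B (n : ℕ) : Aq u 1 n = Bq u (n + 1) := by
  set S : ℝ := ∑ i ∈ Finset.range (n+1), (-1:ℝ)^i * (n.choose i : ℝ) * Pr u (i+1) with hS
  set W : ℝ := ∑ i ∈ Finset.range (n+1), (-1:ℝ)^i * (n.choose (i+1) : ℝ) * Pr u (i+1) with hW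
  have e1 : Aq u 1 n = Bq u n - S := by
    rw [Aq, Bq, hS, ← Finset.sum_sub_distrib]
    refine Finset.sum_congr rfl fun i _ => ?_
    have hPr : Pr u (i+1) = Pr u i * (1 - u (1+i)) := by
      rw [Pr, Pr, Finset.prod_range_succ]
    have hPri : (∏ l ∈ Finset.range i, (1 - u (1 + l))) = Pr u i := rfl
    rw [hPr, hPri]
    ring
  have e3 : Bq u n = Pr u 0 - W := by
    rw [Bq, Finset.sum_range_succ']
    rw [hW, Finset.sum_range_succ]
    simp only [Nat.choose_succ_self, Nat.cast_zero, zero_mul, mul_zero, add_zero,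
      pow_zero, Nat.choose_zero_right, Nat.cast_one, one_mul]
    have : ∀ i ∈ Finset.range n, (-1:ℝ)^(i+1) * (n.choose (i+1) : ℝ) * Pr u (i+1)
        = -((-1:ℝ)^i * (n.choose (i+1) : ℝ) * Pr u (i+1)) := by
      intro i _
      ring
    rw [Finset.sum_congr rfl this, Finset.sum_neg_distrib]
    ring
  have e2 : Bq u (n+1) = Pr u 0 - S - W := by
    rw [Bq, Finset.sum_range_succ']
    simp only [pow_zero, Nat.choose_zero_right, Nat.cast_one, one_mul]
    have : ∀ i ∈ Finset.range (n+1),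
        (-1:ℝ)^(i+1) * (((n+1)).choose (i+1) : ℝ) * Pr u (i+1) =
        (-((-1:ℝ)^i * (n.choose i : ℝ) * Pr u (i+1)))
          + (-((-1:ℝ)^i * (n.choose (i+1) : ℝ) * Pr u (i+1))) := by
      intro i _
      rw [Nat.choose_succ_succ]
      push_cast
      ring
    rw [Finset.sum_congr rfl this, Finset.sum_add_distrib,
      Finset.sum_neg_distrib, Finset.sum_neg_distrib, ← hS, ← hW]
    ring
  rw [e1, e3, e2]
  ring

end Comb

section Lead

variable {d : ℕ}

/-- The current chain-record value. -/
def leadVal (q : ℕ → Fin d → ℝ) : ℕ → (Fin d → ℝ)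
  | 0 => q 0
  | n + 1 => if prec (leadVal q n) (q (n + 1)) then q (n + 1) else leadVal q n

lemma chainLead_le (q : ℕ → Fin d → ℝ) (n : ℕ) : chainLead q n ≤ n := by
  induction n with
  | zero => simp [chainLead]
  | succ n ih =>
      rw [chainLead]
      split
      · exact le_refl _
      · exact le_trans ih (Nat.le_succ n)

lemma leadVal_eq (q : ℕ → Fin d → ℝ) (n : ℕ) : leadVal q n = q (chainLead q n) := by
  induction n with
  | zero => rfl
  | succ n ih =>
      rw [leadVal, chainLead, ih]
      split
      · rfl
      · rfl

lemma chainLead_succ_iff (q : ℕ → Fin d → ℝ) (n : ℕ) :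
    chainLead q (n + 1) = n + 1 ↔ prec (leadVal q n) (q (n + 1)) := by
  rw [chainLead, leadVal_eq]
  constructor
  · intro h
    by_contra hp
    rw [if_neg hp] at h
    have := chainLead_le q n
    omega
  · intro h
    rw [if_pos h]

lemma leadVal_congr {q q' : ℕ → Fin d → ℝ} (n : ℕ) (h : ∀ i ≤ n, q i = q' i) :
    leadVal q n = leadVal q' n := by
  induction n with
  | zero => exact h 0 (le_refl 0)
  | succ n ih =>
      have hih := ih fun i hi => h i (le_trans hi (Nat.le_succ n))
      rw [leadVal, leadVal, hih, h (n+1) (le_refl _)]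

lemma measurable_leadVal (n : ℕ) :
    Measurable (fun q : ℕ → Fin d → ℝ => leadVal q n) := by
  induction n with
  | zero => exact measurable_pi_apply 0
  | succ n ih =>
      have hset : MeasurableSet {q : ℕ → Fin d → ℝ | prec (leadVal q n) (q (n+1))} := by
        have : {q : ℕ → Fin d → ℝ | prec (leadVal q n) (q (n+1))} =
            ⋂ i, {q : ℕ → Fin d → ℝ | leadVal q n i < q (n+1) i} := by
          ext q; simp [prec, Set.mem_iInter]
        rw [this]
        refine MeasurableSet.iInter fun i => measurableSet_lt ?_ ?_
        · exact (measurable_pi_apply i).comp ih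
        · exact (measurable_pi_apply i).comp (measurable_pi_apply (n+1))
      exact Measurable.ite hset (measurable_pi_apply (n+1)) ih

lemma measurable_gfun (j : ℕ) :
    Measurable (fun x : Fin d → ℝ =>
      if x ∈ simplex d then (1 - ∑ i, x i) ^ (d * j) else 0) := by
  exact Measurable.ite (measurableSet_simplex d)
    ((measurable_const.sub (Finset.measurable_sum _ fun i _ => measurable_pi_apply i)).pow
      measurable_const) measurable_const

lemma gfun_nonneg (j : ℕ) (x : Fin d → ℝ) :
    0 ≤ (if x ∈ simplex d then (1 - ∑ i, x i) ^ (d * j) else 0) := by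
  split
  · next h => exact pow_nonneg (by linarith [h.2]) _
  · exact le_refl 0

lemma gfun_le_one (j : ℕ) (x : Fin d → ℝ) :
    (if x ∈ simplex d then (1 - ∑ i, x i) ^ (d * j) else 0) ≤ 1 := by
  split
  · next h => exact pow_le_one₀ (by linarith [h.2]) (by linarith [sum_nonneg_of_simplex h])
  · exact zero_le_one

end Lead

section Prob

variable {Ω : Type*} [MeasurableSpace Ω] {P : Measure Ω} [IsProbabilityMeasure P]
  {d : ℕ} {p : ℕ → Ω → (Fin d → ℝ)}

lemma measurable_X (hmeas : ∀ n, Measurable (p n)) (n : ℕ) :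
    Measurable (fun ω => leadVal (fun i => p i ω) n) :=
  (measurable_leadVal n).comp (measurable_pi_lambda _ fun i => hmeas i)

lemma indep_lead (hmeas : ∀ n, Measurable (p n))
    (hindep : iIndepFun p P) (n : ℕ) :
    IndepFun (fun ω => leadVal (fun i => p i ω) n) (p (n+1)) P := by
  have hdisj : Disjoint (Finset.range (n+1)) ({n+1} : Finset ℕ) := by
    simp [Finset.disjoint_singleton_right]
  have h := hindep.indepFun_finset (Finset.range (n+1)) {n+1} hdisj hmeas
  have hmem : (n+1) ∈ ({n+1} : Finset ℕ) := Finset.mem_singleton_self _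
  set Φ : ((i : (Finset.range (n+1) : Finset ℕ)) → (Fin d → ℝ)) → (Fin d → ℝ) := fun v =>
    leadVal (fun i => if h : i ∈ Finset.range (n+1) then v ⟨i, h⟩ else 0) n with hΦdef
  set Ψ : ((i : ({n+1} : Finset ℕ)) → (Fin d → ℝ)) → (Fin d → ℝ) := fun v =>
    v ⟨n+1, hmem⟩ with hΨdef
  have hΦ : Measurable Φ := by
    refine (measurable_leadVal n).comp (measurable_pi_lambda _ fun i => ?_)
    by_cases hi : i ∈ Finset.range (n+1)
    · simp only [hi, dif_pos]
      exact measurable_pi_apply _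
    · simp only [hi, dif_neg, not_false_iff]
      exact measurable_const
  have hΨ : Measurable Ψ := measurable_pi_apply _
  have hcomp := h.comp hΦ hΨ
  have heq1 : (Φ ∘ fun a (i : (Finset.range (n+1) : Finset ℕ)) => p i a) =
      fun ω => leadVal (fun i => p i ω) n := by
    funext ω
    simp only [Function.comp_apply, hΦdef]
    refine leadVal_congr n fun i hi => ?_
    rw [dif_pos (Finset.mem_range.mpr (Nat.lt_succ_of_le hi))]
  have heq2 : (Ψ ∘ fun a (i : ({n+1} : Finset ℕ)) => p i a) = p (n+1) := rfl
  rw [heq1, heq2] at hcomp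
  exact hcomp

lemma ae_p_mem (hmeas : ∀ n, Measurable (p n))
    (hdist : ∀ n, P.map (p n) = unif (simplex d)) :
    ∀ᵐ ω ∂P, ∀ i, p i ω ∈ simplex d := by
  rw [MeasureTheory.ae_all_iff]
  intro i
  have h : P ((p i) ⁻¹' (simplex d)ᶜ) = 0 := by
    rw [← Measure.map_apply (hmeas i) (measurableSet_simplex d).compl, hdist i]
    rw [unif, Measure.smul_apply, Measure.restrict_apply (measurableSet_simplex d).compl]
    simp
  rw [MeasureTheory.ae_iff]
  exact h

lemma ae_lead_mem (hmeas : ∀ n, Measurable (p n))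
    (hdist : ∀ n, P.map (p n) = unif (simplex d)) (n : ℕ) :
    ∀ᵐ ω ∂P, leadVal (fun i => p i ω) n ∈ simplex d := by
  filter_upwards [ae_p_mem hmeas hdist] with ω hω
  rw [leadVal_eq]
  exact hω _

lemma transfer (hmeas : ∀ n, Measurable (p n))
    (hdist : ∀ n, P.map (p n) = unif (simplex d))
    (hindep : iIndepFun p P) (n : ℕ)
    (Φ : (Fin d → ℝ) × (Fin d → ℝ) → ℝ) (hΦm : Measurable Φ) (hΦb : ∀ z, |Φ z| ≤ 1) :
    ∫ ω, Φ (leadVal (fun i => p i ω) n, p (n+1) ω) ∂P =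
    ∫ ω, ∫ y, Φ (leadVal (fun i => p i ω) n, y) ∂(unif (simplex d)) ∂P := by
  set X := fun ω => leadVal (fun i => p i ω) n with hX
  have hXm : Measurable X := measurable_X hmeas n
  have hpair : P.map (fun ω => (X ω, p (n+1) ω)) = (P.map X).prod (unif (simplex d)) := by
    rw [← hdist (n+1)]
    exact (indepFun_iff_map_prod_eq_prod_map_map hXm.aemeasurable
      (hmeas (n+1)).aemeasurable).1 (indep_lead hmeas hindep n)
  have hprob : IsProbabilityMeasure (P.map X) := Measure.isProbabilityMeasure_map hXm.aemeasurable
  have hint : Integrable Φ ((P.map X).prod (unif (simplex d))) := by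
    refine Integrable.mono' (integrable_const 1) hΦm.aestronglyMeasurable ?_
    exact Filter.Eventually.of_forall fun z => by
      simpa [Real.norm_eq_abs] using hΦb z
  calc ∫ ω, Φ (X ω, p (n+1) ω) ∂P
      = ∫ z, Φ z ∂(P.map (fun ω => (X ω, p (n+1) ω))) := by
        rw [integral_map (hXm.prodMk (hmeas (n+1))).aemeasurable hΦm.aestronglyMeasurable]
    _ = ∫ z, Φ z ∂((P.map X).prod (unif (simplex d))) := by rw [hpair]
    _ = ∫ x, ∫ y, Φ (x, y) ∂(unif (simplex d)) ∂(P.map X) := integral_prod Φ hint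
    _ = ∫ ω, ∫ y, Φ (X ω, y) ∂(unif (simplex d)) ∂P := by
        rw [integral_map hXm.aemeasurable
          hΦm.stronglyMeasurable.integral_prod_right'.aestronglyMeasurable]

/-- dominance weight function -/
def gf (d j : ℕ) (x : Fin d → ℝ) : ℝ :=
  if x ∈ simplex d then (1 - ∑ i, x i) ^ (d * j) else 0

/-- the moment constants -/
def cc (d m : ℕ) : ℝ := (d.factorial : ℝ) * m.factorial / (m + d).factorial

lemma measurable_gf (d j : ℕ) : Measurable (gf d j) := by
  unfold gf
  exact Measurable.ite (measurableSet_simplex d)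
    ((measurable_const.sub (Finset.measurable_sum _ fun i _ => measurable_pi_apply i)).pow
      measurable_const) measurable_const

lemma gf_nonneg (d j : ℕ) (x : Fin d → ℝ) : 0 ≤ gf d j x := by
  unfold gf; split
  · next h => exact pow_nonneg (by linarith [h.2]) _
  · exact le_refl 0

lemma gf_le_one (d j : ℕ) (x : Fin d → ℝ) : gf d j x ≤ 1 := by
  unfold gf; split
  · next h => exact pow_le_one₀ (by linarith [h.2]) (by linarith [sum_nonneg_of_simplex h])
  · exact zero_le_one

lemma gf_abs_le_one (d j : ℕ) (x : Fin d → ℝ) : |gf d j x| ≤ 1 := by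
  rw [abs_of_nonneg (gf_nonneg d j x)]; exact gf_le_one d j x

lemma gf_mul {d j : ℕ} {x : Fin d → ℝ} (hx : x ∈ simplex d) :
    gf d j x * (1 - ∑ i, x i) ^ d = gf d (j + 1) x := by
  rw [gf, gf, if_pos hx, if_pos hx, ← pow_add, show d*j+d = d*(j+1) from by ring]

lemma integral_gf_prec {d : ℕ} (j : ℕ) {x : Fin d → ℝ} (hx : x ∈ simplex d) :
    ∫ y, (if prec x y then gf d j y else 0) ∂(unif (simplex d)) =
      cc d (d * j) * gf d (j + 1) x := by
  have hae : (fun y => if prec x y then gf d j y else 0) =ᵐ[unif (simplex d)]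
      (fun y => if prec x y then (1 - ∑ i, y i) ^ (d * j) else 0) := by
    filter_upwards [unif_ae_mem d] with y hy
    by_cases hp : prec x y <;> simp [gf, hp, hy]
  rw [integral_congr_ae hae, integral_unif_prec (d * j) hx, gf, if_pos hx, cc]
  rw [show d * j + d = d * (j + 1) from by ring]

lemma integral_ind_prec {d : ℕ} {x : Fin d → ℝ} (hx : x ∈ simplex d) :
    ∫ y, (if prec x y then (1:ℝ) else 0) ∂(unif (simplex d)) = (1 - ∑ i, x i) ^ d := by
  have h := integral_unif_prec 0 hx
  simp only [pow_zero, Nat.factorial_zero, Nat.cast_one, mul_one, zero_add] at h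
  rw [h]
  rw [div_self (by exact_mod_cast d.factorial_ne_zero : (d.factorial : ℝ) ≠ 0)]
  ring

lemma psi_eval {d : ℕ} (j : ℕ) {x : Fin d → ℝ} (hx : x ∈ simplex d) :
    ∫ y, gf d j (if prec x y then y else x) ∂(unif (simplex d)) =
      gf d j x - (1 - cc d (d * j)) * gf d (j + 1) x := by
  have hsplit : (fun y => gf d j (if prec x y then y else x)) =
      fun y => (if prec x y then gf d j y else 0) +
        (gf d j x - gf d j x * (if prec x y then (1:ℝ) else 0)) := by
    funext y
    by_cases hp : prec x y <;> simp [hp]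
  rw [hsplit]
  have hint1 : Integrable (fun y => if prec x y then gf d j y else 0) (unif (simplex d)) := by
    refine Integrable.mono' (integrable_const 1) ?_ ?_
    · refine (Measurable.ite ?_ (measurable_gf d j) measurable_const).aestronglyMeasurable
      have : {y : Fin d → ℝ | prec x y} = ⋂ i, {y : Fin d → ℝ | x i < y i} := by
        ext y; simp [prec, Set.mem_iInter]
      rw [this]
      exact MeasurableSet.iInter fun i =>
        measurableSet_lt measurable_const (measurable_pi_apply i)
    · refine Filter.Eventually.of_forall fun y => ?_
      rw [Real.norm_eq_abs]
      by_cases hp : prec x y <;> simp [hp, abs_of_nonneg (gf_nonneg d j y), gf_le_one d j y]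
  have hint2 : Integrable
      (fun y => gf d j x - gf d j x * (if prec x y then (1:ℝ) else 0)) (unif (simplex d)) := by
    refine (integrable_const (gf d j x)).sub ?_
    refine Integrable.mono' (integrable_const 1) ?_ ?_
    · refine (measurable_const.mul (Measurable.ite ?_ measurable_const
        measurable_const)).aestronglyMeasurable
      have : {y : Fin d → ℝ | prec x y} = ⋂ i, {y : Fin d → ℝ | x i < y i} := by
        ext y; simp [prec, Set.mem_iInter]
      rw [this]
      exact MeasurableSet.iInter fun i =>
        measurableSet_lt measurable_const (measurable_pi_apply i)
    · refine Filter.Eventually.of_forall fun y => ?_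
      rw [Real.norm_eq_abs]
      by_cases hp : prec x y
      · simp [hp, abs_of_nonneg (gf_nonneg d j x), gf_le_one d j x]
      · simp [hp]
  rw [integral_add hint1 hint2, integral_gf_prec j hx]
  rw [integral_sub (integrable_const _) (by
    refine Integrable.mono' (integrable_const 1) ?_ ?_
    · refine (measurable_const.mul (Measurable.ite ?_ measurable_const
        measurable_const)).aestronglyMeasurable
      have : {y : Fin d → ℝ | prec x y} = ⋂ i, {y : Fin d → ℝ | x i < y i} := by
        ext y; simp [prec, Set.mem_iInter]
      rw [this]
      exact MeasurableSet.iInter fun i =>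
        measurableSet_lt measurable_const (measurable_pi_apply i)
    · refine Filter.Eventually.of_forall fun y => ?_
      rw [Real.norm_eq_abs]
      by_cases hp : prec x y
      · simp [hp, abs_of_nonneg (gf_nonneg d j x), gf_le_one d j x]
      · simp [hp])]
  rw [integral_const, MeasureTheory.integral_const_mul, integral_ind_prec hx]
  simp only [measureReal_def, measure_univ, ENNReal.toReal_one, smul_eq_mul, one_mul]
  rw [gf_mul hx]
  ring

lemma integrable_gf_comp {Ω' : Type*} [MeasurableSpace Ω'] {Q : Measure Ω'}
    [IsProbabilityMeasure Q] {d j : ℕ} {X : Ω' → (Fin d → ℝ)} (hX : Measurable X) :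
    Integrable (fun ω => gf d j (X ω)) Q := by
  refine Integrable.mono' (integrable_const 1) ((measurable_gf d j).comp hX).aestronglyMeasurable ?_
  exact Filter.Eventually.of_forall fun ω => by
    rw [Real.norm_eq_abs]; exact gf_abs_le_one d j (X ω)

lemma M_base (hmeas : ∀ n, Measurable (p n))
    (hdist : ∀ n, P.map (p n) = unif (simplex d)) (j : ℕ) :
    ∫ ω, gf d j (p 0 ω) ∂P = cc d (d * j) := by
  rw [← integral_map (hmeas 0).aemeasurable (measurable_gf d j).aestronglyMeasurable, hdist 0]
  have hzero : (0 : Fin d → ℝ) ∈ simplex d := ⟨fun i => le_refl 0, by simp⟩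
  have hnull : unif (simplex d) (⋃ i, {y : Fin d → ℝ | y i = 0}) = 0 := by
    apply unif_null
    rw [measure_iUnion_null_iff]
    intro i
    rw [volume_pi]
    exact Measure.pi_hyperplane _ _ 0
  have hae : gf d j =ᵐ[unif (simplex d)]
      (fun y => if prec 0 y then (1 - ∑ i, y i) ^ (d * j) else 0) := by
    filter_upwards [unif_ae_mem d, compl_mem_ae_iff.2 hnull] with y hy hz
    simp only [Set.mem_compl_iff, Set.mem_iUnion, Set.mem_setOf_eq, not_exists] at hz
    have hp : prec 0 y := fun i => lt_of_le_of_ne (hy.1 i) (Ne.symm (hz i))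
    rw [gf, if_pos hy, if_pos hp]
  rw [integral_congr_ae hae, integral_unif_prec (d * j) hzero]
  simp [cc]

lemma M_rec (hmeas : ∀ n, Measurable (p n))
    (hdist : ∀ n, P.map (p n) = unif (simplex d))
    (hindep : iIndepFun p P) (j n : ℕ) :
    ∫ ω, gf d j (leadVal (fun i => p i ω) (n+1)) ∂P =
    (∫ ω, gf d j (leadVal (fun i => p i ω) n) ∂P)
      - (1 - cc d (d * j)) * ∫ ω, gf d (j+1) (leadVal (fun i => p i ω) n) ∂P := by
  set Φ : (Fin d → ℝ) × (Fin d → ℝ) → ℝ :=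
    fun z => gf d j (if prec z.1 z.2 then z.2 else z.1) with hΦdef
  have hΦm : Measurable Φ := by
    refine (measurable_gf d j).comp ?_
    exact Measurable.ite (measurableSet_prec_pair d) measurable_snd measurable_fst
  have hΦb : ∀ z, |Φ z| ≤ 1 := fun z => gf_abs_le_one d j _
  have hstep : (fun ω => gf d j (leadVal (fun i => p i ω) (n+1))) =
      fun ω => Φ (leadVal (fun i => p i ω) n, p (n+1) ω) := by
    funext ω
    simp only [leadVal, hΦdef]
  rw [hstep, transfer hmeas hdist hindep n Φ hΦm hΦb]
  have hae : (fun ω => ∫ y, Φ (leadVal (fun i => p i ω) n, y) ∂(unif (simplex d))) =ᵐ[P]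
      (fun ω => gf d j (leadVal (fun i => p i ω) n)
        - (1 - cc d (d * j)) * gf d (j+1) (leadVal (fun i => p i ω) n)) := by
    filter_upwards [ae_lead_mem hmeas hdist n] with ω hω
    exact psi_eval j hω
  rw [integral_congr_ae hae]
  have hX : Measurable (fun ω => leadVal (fun i => p i ω) n) := measurable_X hmeas n
  rw [integral_sub (integrable_gf_comp hX) ((integrable_gf_comp hX).const_mul _),
    MeasureTheory.integral_const_mul]

lemma M_eq_A (hmeas : ∀ n, Measurable (p n))
    (hdist : ∀ n, P.map (p n) = unif (simplex d))
    (hindep : iIndepFun p P) :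
    ∀ n j, ∫ ω, gf d j (leadVal (fun i => p i ω) n) ∂P =
      Aq (fun l => cc d (d * l)) j n := by
  intro n
  induction n with
  | zero =>
      intro j
      have h : (fun ω => gf d j (leadVal (fun i => p i ω) 0)) = fun ω => gf d j (p 0 ω) := by
        funext ω; simp only [leadVal]
      rw [h, M_base hmeas hdist j, Aq_zero]
  | succ n ih =>
      intro j
      rw [M_rec hmeas hdist hindep j n, ih j, ih (j+1), Aq_rec]

lemma exp_record (hmeas : ∀ n, Measurable (p n))
    (hdist : ∀ n, P.map (p n) = unif (simplex d))
    (hindep : iIndepFun p P) (k : ℕ) :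
    ∫ ω, (if chainLead (fun i => p i ω) k = k then (1:ℝ) else 0) ∂P =
      Bq (fun l => cc d (d * l)) k := by
  cases k with
  | zero =>
      have h : (fun ω => if chainLead (fun i => p i ω) 0 = 0 then (1:ℝ) else 0) =
          fun _ => (1:ℝ) := by
        funext ω
        simp [chainLead]
      rw [h, integral_const]
      simp [Bq, Pr]
  | succ n =>
      set Φ : (Fin d → ℝ) × (Fin d → ℝ) → ℝ :=
        fun z => if prec z.1 z.2 then (1:ℝ) else 0 with hΦdef
      have hΦm : Measurable Φ :=
        Measurable.ite (measurableSet_prec_pair d) measurable_const measurable_const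
      have hΦb : ∀ z, |Φ z| ≤ 1 := by
        intro z
        by_cases hp : prec z.1 z.2 <;> simp [hΦdef, hp]
      have hstep : (fun ω => if chainLead (fun i => p i ω) (n+1) = n+1 then (1:ℝ) else 0) =
          fun ω => Φ (leadVal (fun i => p i ω) n, p (n+1) ω) := by
        funext ω
        simp only [hΦdef]
        by_cases hc : chainLead (fun i => p i ω) (n+1) = n+1
        · rw [if_pos hc, if_pos ((chainLead_succ_iff _ n).1 hc)]
        · rw [if_neg hc, if_neg (fun hp => hc ((chainLead_succ_iff _ n).2 hp))]
      rw [hstep, transfer hmeas hdist hindep n Φ hΦm hΦb]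
      have hae : (fun ω => ∫ y, Φ (leadVal (fun i => p i ω) n, y) ∂(unif (simplex d))) =ᵐ[P]
          (fun ω => gf d 1 (leadVal (fun i => p i ω) n)) := by
        filter_upwards [ae_lead_mem hmeas hdist n] with ω hω
        simp only [hΦdef]
        rw [integral_ind_prec hω, gf, if_pos hω, mul_one]
      rw [integral_congr_ae hae, M_eq_A hmeas hdist hindep n 1, A1B]

lemma integrable_record (hmeas : ∀ n, Measurable (p n)) (k : ℕ) :
    Integrable (fun ω => if chainLead (fun i => p i ω) k = k then (1:ℝ) else 0) P := by
  cases k with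
  | zero =>
      have h : (fun ω => if chainLead (fun i => p i ω) 0 = 0 then (1:ℝ) else 0) =
          fun _ => (1:ℝ) := by
        funext ω; simp [chainLead]
      rw [h]
      exact integrable_const 1
  | succ n =>
      have hstep : (fun ω => if chainLead (fun i => p i ω) (n+1) = n+1 then (1:ℝ) else 0) =
          fun ω => if prec (leadVal (fun i => p i ω) n) (p (n+1) ω) then (1:ℝ) else 0 := by
        funext ω
        by_cases hc : chainLead (fun i => p i ω) (n+1) = n+1
        · rw [if_pos hc, if_pos ((chainLead_succ_iff _ n).1 hc)]
        · rw [if_neg hc, if_neg (fun hp => hc ((chainLead_succ_iff _ n).2 hp))]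
      rw [hstep]
      have hset : MeasurableSet {ω | prec (leadVal (fun i => p i ω) n) (p (n+1) ω)} := by
        have : {ω | prec (leadVal (fun i => p i ω) n) (p (n+1) ω)} =
            (fun ω => (leadVal (fun i => p i ω) n, p (n+1) ω)) ⁻¹'
              {z : (Fin d → ℝ) × (Fin d → ℝ) | prec z.1 z.2} := rfl
        rw [this]
        exact (measurableSet_prec_pair d).preimage
          ((measurable_X hmeas n).prodMk (hmeas (n+1)))
      refine Integrable.mono' (integrable_const 1)
        (Measurable.ite hset measurable_const measurable_const).aestronglyMeasurable ?_
      exact Filter.Eventually.of_forall fun ω => by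
        rw [Real.norm_eq_abs]
        split <;> simp

lemma sumB_eq_T (u : ℕ → ℝ) : ∀ n, ∑ k ∈ Finset.range n, Bq u k = Tq u n := by
  intro n
  induction n with
  | zero => simp [Tq]
  | succ n ih => rw [Finset.sum_range_succ, ih, TB]

lemma EY_eq_T (hmeas : ∀ n, Measurable (p n))
    (hdist : ∀ n, P.map (p n) = unif (simplex d))
    (hindep : iIndepFun p P) (n : ℕ) :
    ∫ ω, (chainCount (fun i => p i ω) n : ℝ) ∂P = Tq (fun l => cc d (d * l)) n := by
  have hcast : ∀ q : ℕ → Fin d → ℝ, (chainCount q n : ℝ) =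
      ∑ k ∈ Finset.range n, (if chainLead q k = k then (1:ℝ) else 0) := by
    intro q
    rw [chainCount, Finset.card_filter, Nat.cast_sum]
    exact Finset.sum_congr rfl fun k _ => by split <;> simp
  simp only [hcast]
  rw [MeasureTheory.integral_finset_sum _ (fun k _ => integrable_record hmeas k)]
  have hsum : ∀ k ∈ Finset.range n,
      (∫ ω, (if chainLead (fun i => p i ω) k = k then (1:ℝ) else 0) ∂P) =
      Bq (fun l => cc d (d * l)) k := fun k _ => exp_record hmeas hdist hindep k
  rw [Finset.sum_congr rfl hsum, sumB_eq_T]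

end Prob

lemma prod_Icc_fact (N k : ℕ) :
    (∏ i ∈ Finset.Icc 1 k, ((N + i : ℕ) : ℝ)) * (N.factorial : ℝ) =
      ((N + k).factorial : ℝ) := by
  induction k with
  | zero => simp
  | succ k ih =>
      rw [Finset.prod_Icc_succ_top (by omega : 1 ≤ k + 1), mul_right_comm, ih,
        show N + (k+1) = (N+k)+1 from rfl, Nat.factorial_succ]
      push_cast
      ring

lemma cc_eq (d j : ℕ) :
    (d.factorial : ℝ) / ∏ l ∈ Finset.Icc 1 d, ((d * j + l : ℕ) : ℝ) = cc d (d * j) := by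
  set N := d * j with hN
  have hfact := prod_Icc_fact N d
  have hNne : ((N.factorial : ℕ) : ℝ) ≠ 0 := by exact_mod_cast N.factorial_ne_zero
  have hNdne : (((N+d).factorial : ℕ) : ℝ) ≠ 0 := by exact_mod_cast (N+d).factorial_ne_zero
  have hprod_ne : (∏ l ∈ Finset.Icc 1 d, ((N + l : ℕ) : ℝ)) ≠ 0 := by
    intro h0
    rw [h0, zero_mul] at hfact
    exact hNdne hfact.symm
  rw [cc, div_eq_div_iff hprod_ne hNdne, ← hfact]
  ring

end ChainAux


/-- Exact formula for the expected number of chain records for iud samples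
from the `d`-dimensional simplex. -/
theorem chain_records_mean_exact_simplex
    {Ω : Type*} [MeasurableSpace Ω] (P : Measure Ω) [IsProbabilityMeasure P]
    (d : ℕ) (hd : 2 ≤ d) (p : ℕ → Ω → (Fin d → ℝ))
    (hmeas : ∀ n, Measurable (p n))
    (hdist : ∀ n, P.map (p n) = unif (simplex d))
    (hindep : iIndepFun p P) :
    ∀ n : ℕ, 1 ≤ n →
      ∫ ω, (chainCount (fun i => p i ω) n : ℝ) ∂P =
        ∑ k ∈ Finset.Icc 1 n,
          (n.choose k : ℝ) * (-1 : ℝ) ^ (k - 1) *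
            ∏ j ∈ Finset.Icc 1 (k - 1),
              (1 - (d.factorial : ℝ) / ∏ i ∈ Finset.Icc 1 d, ((d * j + i : ℕ) : ℝ)) := by
  intro n hn
  have hmain : ∀ j : ℕ,
      (1:ℝ) - (d.factorial : ℝ) / ∏ l ∈ Finset.Icc 1 d, ((d * j + l : ℕ) : ℝ)
        = 1 - ChainAux.cc d (d * j) := by
    intro j
    rw [ChainAux.cc_eq d j]
  have hprodIcc : ∀ i : ℕ, (∏ j ∈ Finset.Icc 1 i,
      ((1:ℝ) - (d.factorial : ℝ) / ∏ l ∈ Finset.Icc 1 d, ((d * j + l : ℕ) : ℝ)))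
        = ChainAux.Pr (fun l => ChainAux.cc d (d * l)) i := by
    intro i
    rw [show Finset.Icc 1 i = Finset.Ico 1 (i+1) from (Finset.Ico_add_one_right_eq_Icc 1 i),
      Finset.prod_Ico_eq_prod_range]
    simp only [Nat.add_sub_cancel]
    rw [ChainAux.Pr]
    exact Finset.prod_congr rfl fun l _ => hmain (1 + l)
  have hRHS : (∑ k ∈ Finset.Icc 1 n,
        (n.choose k : ℝ) * (-1 : ℝ) ^ (k - 1) *
          ∏ j ∈ Finset.Icc 1 (k - 1),
            (1 - (d.factorial : ℝ) / ∏ i ∈ Finset.Icc 1 d, ((d * j + i : ℕ) : ℝ)))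
      = ChainAux.Tq (fun l => ChainAux.cc d (d * l)) n := by
    rw [show Finset.Icc 1 n = Finset.Ico 1 (n+1) from (Finset.Ico_add_one_right_eq_Icc 1 n),
      Finset.sum_Ico_eq_sum_range]
    simp only [Nat.add_sub_cancel]
    rw [ChainAux.Tq]
    refine Finset.sum_congr rfl fun i _ => ?_
    rw [show (1:ℕ) + i - 1 = i from by omega, hprodIcc i,
      show (1:ℕ) + i = i + 1 from by omega]
  rw [hRHS]
  exact ChainAux.EY_eq_T hmeas hdist hindep n
end
end

section
/- Let d ≥ 1 and let p_1, p_2, … be i.i.d. random vectors uniformly distributed on the d-dimensional simplex S_d, and let Z_n denote the number of dominating records of p_1,…,p_n. Then for every n ≥ 1, E[Z_n] = Σ_{k=1}^{n} (d!)^k Γ(k)^d / Γ(dk+1). -/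
open MeasureTheory ProbabilityTheory Filter Asymptotics Real Set

noncomputable section

attribute [local instance] Classical.propDecidable

namespace DomRec
open scoped ENNReal

lemma beta_nat (b : ℕ) : ∀ (a : ℕ) (t : ℝ), 0 ≤ t →
    ∫ x in (0:ℝ)..t, x ^ a * (t - x) ^ b
      = (a.factorial * b.factorial / (a + b + 1).factorial : ℝ) * t ^ (a + b + 1) := by
  induction b with
  | zero =>
    intro a t ht
    simp only [pow_zero, mul_one, integral_pow, Nat.add_zero, Nat.factorial_succ,
      Nat.factorial_zero]
    push_cast
    have ha : ((a:ℝ)+1) ≠ 0 := by positivity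
    have : (a.factorial : ℝ) ≠ 0 := by positivity
    field_simp
    ring
  | succ b ih =>
    intro a t ht
    have hu : ∀ x ∈ Set.uIcc (0:ℝ) t, HasDerivAt (fun x : ℝ => (t - x) ^ (b+1))
        (-( (b+1) * (t - x) ^ b)) x := by
      intro x _
      have h1 : HasDerivAt (fun x : ℝ => t - x) (-1) x := by
        simpa using (hasDerivAt_id x).const_sub t
      have := h1.fun_pow (b+1)
      simpa [mul_comm, mul_assoc, mul_left_comm] using this
    have ha : ((a:ℝ)+1) ≠ 0 := by positivity
    have hv : ∀ x ∈ Set.uIcc (0:ℝ) t, HasDerivAt (fun x : ℝ => x ^ (a+1) / (a+1))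
        (x ^ a) x := by
      intro x _
      have h2 := (hasDerivAt_pow (a+1) x).div_const ((a:ℝ)+1)
      refine h2.congr_deriv ?_
      push_cast
      field_simp
    have hint1 : IntervalIntegrable (fun x : ℝ => -((b+1) * (t - x) ^ b)) MeasureTheory.volume 0 t :=
      (Continuous.intervalIntegrable (by continuity) 0 t)
    have hint2 : IntervalIntegrable (fun x : ℝ => x ^ a) MeasureTheory.volume 0 t :=
      (Continuous.intervalIntegrable (by continuity) 0 t)
    have ibp := intervalIntegral.integral_mul_deriv_eq_deriv_mul hu hv hint1 hint2
    have key : ∫ x in (0:ℝ)..t, x ^ a * (t - x) ^ (b+1)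
        = ((b:ℝ)+1)/((a:ℝ)+1) * ∫ x in (0:ℝ)..t, x ^ (a+1) * (t - x) ^ b := by
      have comm : ∫ x in (0:ℝ)..t, x ^ a * (t - x) ^ (b+1)
          = ∫ x in (0:ℝ)..t, (t - x) ^ (b+1) * x ^ a := by
        congr 1; ext x; ring
      rw [comm, ibp]
      have e1 : (fun x : ℝ => -((b+1) * (t - x) ^ b) * (x ^ (a+1) / (a+1)))
          = (fun x : ℝ => (-((b:ℝ)+1)/((a:ℝ)+1)) * (x ^ (a+1) * (t - x) ^ b)) := by
        ext x; field_simp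
      rw [e1, intervalIntegral.integral_const_mul]
      simp only [sub_self, zero_pow, Nat.succ_ne_zero, ne_eq, not_false_iff, sub_zero]
      ring_nf
    rw [key, ih (a+1) t ht]
    have hfa : ((a+1+b+1).factorial : ℝ) ≠ 0 := by positivity
    have e2 : a + (b+1) + 1 = a + 1 + b + 1 := by omega
    rw [e2]
    rw [Nat.factorial_succ (a), Nat.factorial_succ b]
    push_cast
    field_simp
def T (d : ℕ) (t : ℝ) : Set (Fin d → ℝ) := {x | (∀ i, 0 ≤ x i) ∧ ∑ i, x i ≤ t}

lemma measurableSet_T (d : ℕ) (t : ℝ) : MeasurableSet (T d t) := by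
  have h1 : MeasurableSet {x : Fin d → ℝ | ∀ i, 0 ≤ x i} := by
    rw [show {x : Fin d → ℝ | ∀ i, 0 ≤ x i} = ⋂ i, {x | 0 ≤ x i} from by ext x; simp]
    exact MeasurableSet.iInter fun i => measurableSet_le measurable_const (measurable_pi_apply i)
  have h2 : MeasurableSet {x : Fin d → ℝ | ∑ i, x i ≤ t} :=
    measurableSet_le (Finset.measurable_sum _ fun i _ => measurable_pi_apply i) measurable_const
  exact h1.inter h2

set_option maxHeartbeats 1000000 in
lemma dirichlet (k : ℕ) : ∀ (d : ℕ) (t : ℝ), 0 ≤ t →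
    ∫⁻ x in T d t, ∏ i, ENNReal.ofReal (x i ^ k)
      = ENNReal.ofReal ((k.factorial : ℝ) ^ d / (d * k + d).factorial * t ^ (d * k + d)) := by
  intro d
  induction d with
  | zero =>
    intro t ht
    have hT : T 0 t = Set.univ := by
      ext x
      simp [T, ht, Finset.univ_eq_empty]
    simp only [Finset.univ_eq_empty, Finset.prod_empty, hT, Measure.restrict_univ]
    rw [lintegral_one]
    rw [show (volume : Measure (Fin 0 → ℝ)) = Measure.pi (fun _ => volume) from rfl]
    rw [Measure.pi_univ]
    simp
  | succ d ih =>
    intro t ht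
    set m := d * k + d with hm
    set c := ((k.factorial : ℝ) ^ d / (d * k + d).factorial) with hc
    have hc0 : 0 ≤ c := by positivity
    set f : (Fin (d+1) → ℝ) → ℝ≥0∞ := fun x => ∏ i, ENNReal.ofReal (x i ^ k) with hf
    set e := MeasurableEquiv.piFinSuccAbove (fun _ : Fin (d+1) => ℝ) 0 with he
    have hmp : MeasurePreserving e.symm
        (volume : Measure (ℝ × (Fin d → ℝ))) (volume : Measure (Fin (d+1) → ℝ)) :=
      (volume_preserving_piFinSuccAbove (fun _ : Fin (d+1) => ℝ) 0).symm
    have hesymm : ∀ p : ℝ × (Fin d → ℝ), e.symm p = Fin.cons p.1 p.2 := by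
      intro p
      simp only [he, MeasurableEquiv.piFinSuccAbove_symm_apply, Fin.insertNthEquiv_zero,
        Fin.consEquiv_apply, Fin.insertNth_zero']
      rfl
    set A : Set (ℝ × (Fin d → ℝ)) := {q | q.1 ∈ Set.Icc 0 t ∧ q.2 ∈ T d (t - q.1)} with hA
    set H : ℝ × (Fin d → ℝ) → ℝ≥0∞ :=
      fun q => A.indicator (fun q => ENNReal.ofReal (q.1 ^ k)
        * ∏ j, ENNReal.ofReal (q.2 j ^ k)) q with hH
    have hmem : ∀ p : ℝ × (Fin d → ℝ), (Fin.cons p.1 p.2 ∈ T (d+1) t) ↔ p ∈ A := by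
      rintro ⟨s, z⟩
      simp only [T, A, Set.mem_setOf_eq, Set.mem_Icc, Fin.forall_fin_succ, Fin.cons_zero,
        Fin.cons_succ, Fin.sum_univ_succ]
      constructor
      · rintro ⟨⟨hs, hz⟩, hsum⟩
        have hzsum : 0 ≤ ∑ i, z i := Finset.sum_nonneg fun i _ => hz i
        exact ⟨⟨hs, by linarith⟩, hz, by linarith⟩
      · rintro ⟨⟨hs, hst⟩, hz, hsum⟩
        exact ⟨⟨hs, hz⟩, by linarith⟩
    have step1 : ∫⁻ x in T (d+1) t, f x = ∫⁻ q, H q := by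
      rw [← lintegral_indicator (measurableSet_T (d+1) t) f]
      rw [hmp.lintegral_map_equiv ((T (d+1) t).indicator f) e.symm]
      congr 1
      ext p
      rw [hesymm p]
      simp only [hH]
      by_cases hp : p ∈ A
      · rw [Set.indicator_of_mem ((hmem p).2 hp), Set.indicator_of_mem hp, hf]
        simp only [Fin.prod_univ_succ, Fin.cons_zero, Fin.cons_succ]
      · rw [Set.indicator_of_notMem (fun h => hp ((hmem p).1 h)),
          Set.indicator_of_notMem hp]
    have hAmeas : MeasurableSet A := by
      have h1 : MeasurableSet {q : ℝ × (Fin d → ℝ) | q.1 ∈ Set.Icc 0 t} :=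
        measurable_fst measurableSet_Icc
      have h2 : MeasurableSet {q : ℝ × (Fin d → ℝ) | ∀ i, 0 ≤ q.2 i} := by
        rw [show {q : ℝ × (Fin d → ℝ) | ∀ i, 0 ≤ q.2 i} = ⋂ i, {q | 0 ≤ q.2 i} from by
          ext q; simp]
        exact MeasurableSet.iInter fun i =>
          measurableSet_le measurable_const (by fun_prop)
      have h3 : MeasurableSet {q : ℝ × (Fin d → ℝ) | ∑ i, q.2 i ≤ t - q.1} :=
        measurableSet_le (by fun_prop) (by fun_prop)
      exact h1.inter (h2.inter h3)
    have hHmeas : Measurable H := by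
      apply Measurable.indicator _ hAmeas
      exact ((measurable_fst.pow_const k).ennreal_ofReal).mul
        (Finset.measurable_prod _ fun j _ => (by fun_prop : Measurable
          (fun q : ℝ × (Fin d → ℝ) => q.2 j ^ k)).ennreal_ofReal)
    have step2 : ∫⁻ q, H q = ∫⁻ s, ∫⁻ z, H (s, z) := by
      rw [show (volume : Measure (ℝ × (Fin d → ℝ))) = (volume : Measure ℝ).prod volume from
        Measure.volume_eq_prod _ _, MeasureTheory.lintegral_prod H hHmeas.aemeasurable]
    have inner : ∀ s : ℝ, ∫⁻ z, H (s, z)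
        = (Set.Icc (0:ℝ) t).indicator
            (fun s => ENNReal.ofReal (s ^ k * (c * (t - s) ^ m))) s := by
      intro s
      by_cases hs : s ∈ Set.Icc (0:ℝ) t
      · have h1 : ∀ z, H (s, z) = ENNReal.ofReal (s ^ k)
            * (T d (t - s)).indicator (fun z => ∏ j, ENNReal.ofReal (z j ^ k)) z := by
          intro z
          simp only [hH]
          by_cases hz : z ∈ T d (t - s)
          · have hmem2 : (s, z) ∈ A := ⟨hs, hz⟩
            rw [Set.indicator_of_mem hmem2, Set.indicator_of_mem hz]
          · rw [Set.indicator_of_notMem (fun h => hz h.2), Set.indicator_of_notMem hz,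
              mul_zero]
        rw [Set.indicator_of_mem hs]
        simp only [h1]
        rw [lintegral_const_mul _ ((Finset.measurable_prod _ fun j _ =>
            ((measurable_pi_apply j).pow_const k).ennreal_ofReal).indicator
            (measurableSet_T d (t - s)))]
        rw [lintegral_indicator (measurableSet_T d (t - s)), ih (t - s) (by linarith [hs.2])]
        rw [← ENNReal.ofReal_mul (pow_nonneg hs.1 k)]
      · have h0 : ∀ z, H (s, z) = 0 := fun z =>
          Set.indicator_of_notMem (fun h => hs h.1) _
        simp only [h0, lintegral_zero]
        rw [Set.indicator_of_notMem hs]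
    have hint : MeasureTheory.IntegrableOn (fun s : ℝ => s ^ k * (c * (t - s) ^ m))
        (Set.Ioc 0 t) volume := by
      have hcont : Continuous (fun s : ℝ => s ^ k * (c * (t - s) ^ m)) := by continuity
      exact (hcont.intervalIntegrable 0 t).1
    have hnn : 0 ≤ᵐ[volume.restrict (Set.Ioc 0 t)]
        (fun s : ℝ => s ^ k * (c * (t - s) ^ m)) := by
      refine (ae_restrict_iff' measurableSet_Ioc).2 (Filter.Eventually.of_forall fun s hs => ?_)
      exact mul_nonneg (pow_nonneg hs.1.le k)
        (mul_nonneg hc0 (pow_nonneg (by linarith [hs.2]) m))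
    have outer : ∫⁻ s, (Set.Icc (0:ℝ) t).indicator
        (fun s => ENNReal.ofReal (s ^ k * (c * (t - s) ^ m))) s
        = ENNReal.ofReal (c * ((k.factorial * m.factorial : ℕ) / ((k + m + 1).factorial : ℕ))
            * t ^ (k + m + 1)) := by
      rw [lintegral_indicator measurableSet_Icc,
        ← Measure.restrict_congr_set Ioc_ae_eq_Icc,
        ← ofReal_integral_eq_lintegral_ofReal hint hnn]
      congr 1
      rw [← intervalIntegral.integral_of_le ht]
      rw [show (fun s : ℝ => s ^ k * (c * (t - s) ^ m)) = fun s => c * (s ^ k * (t - s) ^ m)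
        from by ext s; ring]
      rw [intervalIntegral.integral_const_mul, beta_nat m k t ht]
      push_cast
      ring
    rw [step1, step2]
    simp only [inner]
    rw [outer]
    have hexp : (d + 1) * k + (d + 1) = k + m + 1 := by rw [hm]; ring
    rw [hexp]
    congr 1
    have hm0 : ((m.factorial : ℝ)) ≠ 0 := by positivity
    have hkm0 : (((k + m + 1).factorial : ℝ)) ≠ 0 := by positivity
    rw [hc, hm]
    push_cast
    rw [pow_succ]
    field_simp
    ring

lemma simplex_eq_T (d : ℕ) : simplex d = T d 1 := rfl

lemma volume_simplex (d : ℕ) :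
    volume (simplex d) = ENNReal.ofReal (1 / d.factorial) := by
  have h := dirichlet 0 d 1 zero_le_one
  simp only [pow_zero, ENNReal.ofReal_one, Finset.prod_const_one] at h
  rw [setLIntegral_one] at h
  rw [simplex_eq_T, h]
  norm_num

lemma volume_simplex_ne_zero (d : ℕ) : volume (simplex d) ≠ 0 := by
  rw [volume_simplex]
  simp only [ne_eq, ENNReal.ofReal_eq_zero, not_le]
  positivity

lemma volume_simplex_ne_top (d : ℕ) : volume (simplex d) ≠ ⊤ := by
  rw [volume_simplex]; exact ENNReal.ofReal_ne_top

instance unif_simplex_prob (d : ℕ) : IsProbabilityMeasure (unif (simplex d)) := by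
  constructor
  rw [unif, Measure.smul_apply, Measure.restrict_apply MeasurableSet.univ, Set.univ_inter,
    smul_eq_mul]
  exact ENNReal.inv_mul_cancel (volume_simplex_ne_zero d) (volume_simplex_ne_top d)

lemma measurableSet_B {d : ℕ} (x : Fin d → ℝ) : MeasurableSet {q : Fin d → ℝ | prec q x} := by
  rw [show {q : Fin d → ℝ | prec q x} = ⋂ i, {q | q i < x i} from by ext q; simp [prec]]
  exact MeasurableSet.iInter fun i => measurableSet_lt (measurable_pi_apply i) measurable_const

lemma unif_B {d : ℕ} {x : Fin d → ℝ} (hx : x ∈ simplex d) :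
    unif (simplex d) {q | prec q x}
      = (ENNReal.ofReal (1 / d.factorial))⁻¹ * ∏ i, ENNReal.ofReal (x i) := by
  rw [unif, Measure.smul_apply, Measure.restrict_apply (measurableSet_B x), smul_eq_mul,
    volume_simplex]
  congr 1
  have hset : {q : Fin d → ℝ | prec q x} ∩ simplex d
      = Set.univ.pi (fun i => Set.Ico 0 (x i)) := by
    ext q
    simp only [Set.mem_inter_iff, Set.mem_setOf_eq, Set.mem_pi, Set.mem_univ, Set.mem_Ico,
      forall_true_left, simplex, prec]
    constructor
    · rintro ⟨hq, h0, _⟩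
      exact fun i => ⟨h0 i, hq i⟩
    · intro h
      refine ⟨fun i => (h i).2, fun i => (h i).1, ?_⟩
      calc ∑ i, q i ≤ ∑ i, x i := Finset.sum_le_sum fun i _ => (h i).2.le
        _ ≤ 1 := hx.2
  rw [hset, volume_pi_pi]
  congr 1
  ext i
  rw [Real.volume_Ico, sub_zero]

lemma key_lintegral (d k : ℕ) :
    ∫⁻ x, (unif (simplex d) {q | prec q x}) ^ k ∂(unif (simplex d))
      = ENNReal.ofReal ((d.factorial : ℝ) ^ (k + 1) * (k.factorial : ℝ) ^ d
          / ((d * k + d).factorial : ℝ)) := by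
  have hcinv : (ENNReal.ofReal (1 / (d.factorial : ℝ)))⁻¹
      = ENNReal.ofReal (d.factorial : ℝ) := by
    rw [one_div, ENNReal.ofReal_inv_of_pos (by positivity), inv_inv]
  have hcne : (ENNReal.ofReal (1 / (d.factorial : ℝ)))⁻¹ ≠ ⊤ := by
    rw [hcinv]; exact ENNReal.ofReal_ne_top
  rw [unif, lintegral_smul_measure]
  have hcong : ∫⁻ x in simplex d,
        (((volume (simplex d))⁻¹ • volume.restrict (simplex d)) {q | prec q x}) ^ k ∂volume
      = ∫⁻ x in simplex d,
          (ENNReal.ofReal (1 / d.factorial))⁻¹ ^ k * ∏ i, ENNReal.ofReal (x i ^ k) ∂volume := by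
    apply setLIntegral_congr_fun (by rw [simplex_eq_T]; exact measurableSet_T d 1)
    intro x hx
    beta_reduce
    rw [show ((volume (simplex d))⁻¹ • volume.restrict (simplex d)) = unif (simplex d) from rfl,
      unif_B hx, mul_pow, ← Finset.prod_pow]
    congr 1
    exact Finset.prod_congr rfl fun i _ => (ENNReal.ofReal_pow (hx.1 i) k).symm
  rw [hcong, lintegral_const_mul' _ _ (ENNReal.pow_ne_top hcne), volume_simplex, simplex_eq_T,
    dirichlet k d 1 zero_le_one]
  rw [hcinv, one_pow, mul_one, smul_eq_mul, ← ENNReal.ofReal_pow (by positivity), ← ENNReal.ofReal_mul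
    (by positivity), ← ENNReal.ofReal_mul (by positivity)]
  congr 1
  rw [pow_succ]
  ring


lemma pi_prec_prob (d k : ℕ) :
    Measure.pi (fun _ : Fin (k+1) => unif (simplex d))
        {y | ∀ i : Fin (k+1), (i : ℕ) < k → prec (y i) (y (Fin.last k))}
      = ∫⁻ x, (unif (simplex d) {q | prec q x}) ^ k ∂(unif (simplex d)) := by
  set μ := unif (simplex d) with hμ
  set S : Set (Fin (k+1) → (Fin d → ℝ)) :=
    {y | ∀ i : Fin (k+1), (i : ℕ) < k → prec (y i) (y (Fin.last k))} with hS
  have hSmeas : MeasurableSet S := by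
    rw [show S = ⋂ i : Fin (k+1), ⋂ (_ : (i:ℕ) < k), ⋂ j : Fin d,
        {y : Fin (k+1) → Fin d → ℝ | y i j < y (Fin.last k) j} from by ext y; simp [hS, prec]]
    exact MeasurableSet.iInter fun i => MeasurableSet.iInter fun _ =>
      MeasurableSet.iInter fun j =>
        measurableSet_lt ((measurable_pi_apply j).comp (measurable_pi_apply i))
          ((measurable_pi_apply j).comp (measurable_pi_apply (Fin.last k)))
  set e := MeasurableEquiv.piFinSuccAbove (fun _ : Fin (k+1) => Fin d → ℝ) (Fin.last k) with he
  have hmp : MeasurePreserving e.symm (μ.prod (Measure.pi fun _ : Fin k => μ))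
      (Measure.pi fun _ : Fin (k+1) => μ) :=
    (measurePreserving_piFinSuccAbove (fun _ : Fin (k+1) => μ) (Fin.last k)).symm
  rw [← hmp.measure_preimage hSmeas.nullMeasurableSet]
  have hpre : e.symm ⁻¹' S
      = {q : (Fin d → ℝ) × (Fin k → Fin d → ℝ) | ∀ j : Fin k, prec (q.2 j) q.1} := by
    ext ⟨x, z⟩
    have hsnoc : e.symm (x, z) = Fin.snoc z x := by
      simp only [he, MeasurableEquiv.piFinSuccAbove_symm_apply, Fin.insertNthEquiv_last,
        Fin.snocEquiv_apply]
      rfl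
    simp only [Set.mem_preimage, hsnoc, hS, Set.mem_setOf_eq]
    constructor
    · intro h j
      have hj := h (Fin.castSucc j) (by simpa using j.isLt)
      rw [Fin.snoc_castSucc, Fin.snoc_last] at hj
      exact hj
    · intro h i hi
      have hieq : i = Fin.castSucc (⟨i.1, hi⟩ : Fin k) := by
        ext; simp
      rw [Fin.snoc_last, hieq, Fin.snoc_castSucc]
      exact h _
  have hsetmeas : MeasurableSet
      {q : (Fin d → ℝ) × (Fin k → Fin d → ℝ) | ∀ j : Fin k, prec (q.2 j) q.1} := by
    rw [show {q : (Fin d → ℝ) × (Fin k → Fin d → ℝ) | ∀ j : Fin k, prec (q.2 j) q.1}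
        = ⋂ j : Fin k, ⋂ i : Fin d, {q : (Fin d → ℝ) × (Fin k → Fin d → ℝ) | q.2 j i < q.1 i}
      from by ext q; simp [prec]]
    exact MeasurableSet.iInter fun j => MeasurableSet.iInter fun i =>
      measurableSet_lt (by fun_prop) (by fun_prop)
  rw [hpre, Measure.prod_apply hsetmeas]
  refine lintegral_congr fun x => ?_
  have hfiber : (Prod.mk x ⁻¹'
        {q : (Fin d → ℝ) × (Fin k → Fin d → ℝ) | ∀ j : Fin k, prec (q.2 j) q.1})
      = Set.univ.pi fun _ : Fin k => {q : Fin d → ℝ | prec q x} := by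
    ext z
    simp [prec]
  rw [hfiber, Measure.pi_pi, Finset.prod_const, Finset.card_univ, Fintype.card_fin]


lemma joint_law {Ω : Type*} [MeasurableSpace Ω] (P : Measure Ω) [IsProbabilityMeasure P]
    (d : ℕ) (p : ℕ → Ω → (Fin d → ℝ))
    (hmeas : ∀ n, Measurable (p n))
    (hdist : ∀ n, P.map (p n) = unif (simplex d))
    (hindep : iIndepFun p P) (k : ℕ) :
    P.map (fun ω (j : Fin (k+1)) => p (j : ℕ) ω)
      = Measure.pi (fun _ : Fin (k+1) => unif (simplex d)) := by
  classical
  refine (Measure.pi_eq fun s hs => ?_).symm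
  rw [Measure.map_apply (measurable_pi_lambda (fun ω (j : Fin (k+1)) => p (j : ℕ) ω) fun j => hmeas (j : ℕ)) ((MeasurableSet.univ_pi hs : MeasurableSet (Set.univ.pi s)))]
  set sets : ℕ → Set (Fin d → ℝ) :=
    fun m => if h : m < k + 1 then s ⟨m, h⟩ else Set.univ with hsets
  have hsetsmeas : ∀ m, MeasurableSet (sets m) := by
    intro m
    simp only [hsets]
    by_cases h : m < k + 1
    · rw [dif_pos h]; exact hs _
    · rw [dif_neg h]; exact MeasurableSet.univ
  have hpre : (fun ω (j : Fin (k+1)) => p (j : ℕ) ω) ⁻¹' Set.univ.pi s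
      = ⋂ m ∈ Finset.range (k+1), p m ⁻¹' sets m := by
    ext ω
    simp only [Set.mem_preimage, Set.mem_pi, Set.mem_univ, forall_true_left, Set.mem_iInter,
      Finset.mem_range]
    constructor
    · intro h m hm
      simp only [hsets]
      simp only [dif_pos hm, Set.mem_preimage]
      exact h ⟨m, hm⟩
    · intro h j
      have hj := h j.1 j.isLt
      simp only [hsets] at hj
      simp only [dif_pos j.isLt, Set.mem_preimage, Fin.eta] at hj
      exact hj
  rw [hpre, hindep.measure_inter_preimage_eq_mul (Finset.range (k+1))
    (fun m _ => hsetsmeas m)]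
  have hterm : ∀ m, P (p m ⁻¹' sets m) = unif (simplex d) (sets m) := by
    intro m
    rw [← hdist m, Measure.map_apply (hmeas m) (hsetsmeas m)]
  rw [Finset.prod_congr rfl fun m _ => hterm m,
    ← Fin.prod_univ_eq_prod_range (fun m => unif (simplex d) (sets m)) (k+1)]
  refine Finset.prod_congr rfl fun j _ => ?_
  simp only [hsets]
  simp only [dif_pos j.isLt, Fin.eta]

end DomRec

open DomRec in
/-- Exact formula for the expected number of dominating records for iud
samples from the `d`-dimensional simplex. -/
theorem dominating_records_mean_simplex
    {Ω : Type*} [MeasurableSpace Ω] (P : Measure Ω) [IsProbabilityMeasure P]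
    (d : ℕ) (hd : 1 ≤ d) (p : ℕ → Ω → (Fin d → ℝ))
    (hmeas : ∀ n, Measurable (p n))
    (hdist : ∀ n, P.map (p n) = unif (simplex d))
    (hindep : iIndepFun p P) :
    ∀ n : ℕ, 1 ≤ n →
      ∫ ω, (domCount (fun i => p i ω) n : ℝ) ∂P =
        ∑ k ∈ Finset.Icc 1 n,
          (d.factorial : ℝ) ^ k * Real.Gamma (k : ℝ) ^ d /
            Real.Gamma ((d : ℝ) * k + 1) := by
  classical
  intro n hn
  set E : ℕ → Set Ω := fun k => {ω | ∀ i < k, prec (p i ω) (p k ω)} with hE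
  have hEmeas : ∀ k, MeasurableSet (E k) := by
    intro k
    rw [show E k = ⋂ i, ⋂ (_ : i < k), ⋂ j : Fin d, {ω | p i ω j < p k ω j} from by
      ext ω; simp [hE, prec]]
    exact MeasurableSet.iInter fun i => MeasurableSet.iInter fun _ =>
      MeasurableSet.iInter fun j =>
        measurableSet_lt ((measurable_pi_apply j).comp (hmeas i))
          ((measurable_pi_apply j).comp (hmeas k))
  have hdom : ∀ ω, (domCount (fun i => p i ω) n : ℝ)
      = ∑ k ∈ Finset.range n, (E k).indicator (fun _ => (1:ℝ)) ω := by
    intro ω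
    rw [domCount, Finset.card_filter]
    push_cast
    refine Finset.sum_congr rfl fun k _ => ?_
    by_cases h : ω ∈ E k
    · rw [Set.indicator_of_mem h, if_pos]
      exact h
    · rw [Set.indicator_of_notMem h, if_neg]
      exact h
  rw [integral_congr_ae (Filter.Eventually.of_forall hdom),
    integral_finset_sum _ (fun k _ => (integrable_const (1:ℝ)).indicator (hEmeas k))]
  have hPE : ∀ k, P (E k)
      = ENNReal.ofReal ((d.factorial : ℝ) ^ (k+1) * (k.factorial : ℝ) ^ d
          / ((d * k + d).factorial : ℝ)) := by
    intro k
    have hEeq : E k = (fun ω (j : Fin (k+1)) => p (j : ℕ) ω) ⁻¹'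
        {y : Fin (k+1) → Fin d → ℝ |
          ∀ i : Fin (k+1), (i : ℕ) < k → prec (y i) (y (Fin.last k))} := by
      ext ω
      simp only [hE, Set.mem_setOf_eq, Set.mem_preimage, Fin.val_last]
      constructor
      · intro h i hi
        exact h i.1 hi
      · intro h i hi
        exact h ⟨i, Nat.lt_succ_of_lt hi⟩ hi
    have hSmeas : MeasurableSet {y : Fin (k+1) → Fin d → ℝ |
        ∀ i : Fin (k+1), (i : ℕ) < k → prec (y i) (y (Fin.last k))} := by
      rw [show {y : Fin (k+1) → Fin d → ℝ |
            ∀ i : Fin (k+1), (i:ℕ) < k → prec (y i) (y (Fin.last k))}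
          = ⋂ i : Fin (k+1), ⋂ (_ : (i:ℕ) < k), ⋂ j : Fin d,
            {y : Fin (k+1) → Fin d → ℝ | y i j < y (Fin.last k) j} from by ext y; simp [prec]]
      exact MeasurableSet.iInter fun i => MeasurableSet.iInter fun _ =>
        MeasurableSet.iInter fun j => measurableSet_lt (by fun_prop) (by fun_prop)
    rw [hEeq, ← Measure.map_apply (measurable_pi_lambda
        (fun ω (j : Fin (k+1)) => p (j : ℕ) ω) fun j => hmeas (j:ℕ)) hSmeas,
      DomRec.joint_law P d p hmeas hdist hindep k, DomRec.pi_prec_prob d k,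
      DomRec.key_lintegral d k]
  have hterm : ∀ k, ∫ ω, (E k).indicator (fun _ => (1:ℝ)) ω ∂P
      = ((d.factorial : ℝ) ^ (k+1) * (k.factorial : ℝ) ^ d
          / ((d * k + d).factorial : ℝ)) := by
    intro k
    rw [integral_indicator_const (1:ℝ) (hEmeas k), measureReal_def, hPE k, smul_eq_mul, mul_one,
      ENNReal.toReal_ofReal (by positivity)]
  rw [Finset.sum_congr rfl fun k _ => hterm k]
  rw [show Finset.Icc 1 n = Finset.Ico 1 (n+1) from (Finset.Ico_add_one_right_eq_Icc 1 n).symm,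
    Finset.sum_Ico_eq_sum_range]
  simp only [Nat.add_sub_cancel]
  refine Finset.sum_congr rfl fun k _ => ?_
  have h1 : Real.Gamma (((1 + k : ℕ)) : ℝ) = (k.factorial : ℝ) := by
    have he : (((1 + k : ℕ)) : ℝ) = (k : ℝ) + 1 := by push_cast; ring
    rw [he, Real.Gamma_nat_eq_factorial]
  have h2 : Real.Gamma ((d : ℝ) * ((1 + k : ℕ) : ℝ) + 1)
      = (((d * (1 + k)).factorial : ℕ) : ℝ) := by
    have he : (d : ℝ) * ((1 + k : ℕ) : ℝ) + 1 = (((d * (1 + k) : ℕ)) : ℝ) + 1 := by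
      push_cast; ring
    rw [he, Real.Gamma_nat_eq_factorial]
  rw [h1, h2, show d * (1 + k) = d * k + d from by ring, show 1 + k = k + 1 from by ring]
end
end
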